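/- arXiv:1712.05592 — 2 statements merged into one kernel-verified Lean document; each statement's English description precedes it below -/
import Mathlib

section
/- Let g ∈ K[[z]] be the compositional inverse of f(z) := z + z/(1−z). Then 1 − g(−z) = (1 − g(z))^{−1} in K[[z]]. -/
/-!
Formalization of definitions from:
L. Poulain d'Andecy and R. Walker, "Affine Hecke algebras and generalisations
of quiver Hecke algebras for type B".

Presented algebras are realized as `RingQuot` quotients of free algebras.
-/

open scoped BigOperators Classical

noncomputable section

namespace PdAW

variable {K : Type} [Field K]

/-! ### The eigenvalue sets `I_λ` and `S` -/

/-- `I_λ = {λ^ε q^{2t} : ε ∈ {±1}, t ∈ ℤ}`. -/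
def Iset (q lam : K) : Set K :=
  {x | ∃ ε : ℤ, (ε = 1 ∨ ε = -1) ∧ ∃ t : ℤ, x = lam ^ ε * q ^ (2 * t)}

/-- `S = I_{λ_1} ∪ ⋯ ∪ I_{λ_l}`. -/
def Sset {l : ℕ} (q : K) (lam : Fin l → K) : Set K := ⋃ a, Iset q (lam a)

/-! ### The Weyl group action on tuples -/

variable {n : ℕ}

/-- The simple transposition exchanging the (0-based) entries `c` and `c+1`. -/
def swapMove (c : ℕ) (h : c + 1 < n) (i : Fin n → K) : Fin n → K :=
  i ∘ Equiv.swap ⟨c, Nat.lt_of_succ_lt h⟩ ⟨c + 1, h⟩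

/-- The reflection `r_0`, inverting the first entry. -/
def invMove (h : 0 < n) (i : Fin n → K) : Fin n → K :=
  Function.update i ⟨0, h⟩ (i ⟨0, h⟩)⁻¹

/-- One step of the symmetric-group action. -/
def AStep (i j : Fin n → K) : Prop := ∃ c, ∃ h : c + 1 < n, j = swapMove c h i

/-- One step of the type-B Weyl group action. -/
def BStep (i j : Fin n → K) : Prop := AStep i j ∨ ∃ h : 0 < n, j = invMove h i

/-- `j` lies in the `W(B_n)`-orbit of `i`. -/
def inOrbitB (i j : Fin n → K) : Prop := Relation.ReflTransGen BStep i j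

/-- `β` is an orbit for the action of `W(B_n)`. -/
def IsBOrbit (β : Set (Fin n → K)) : Prop := ∃ i₀ ∈ β, β = {j | inOrbitB i₀ j}

/-- `α` is a union of orbits for the symmetric group action (i.e. is closed under it). -/
def IsAClosed (α : Set (Fin n → K)) : Prop :=
  ∀ i ∈ α, ∀ c, ∀ h : c + 1 < n, swapMove c h i ∈ α

theorem fin_lt (c : Fin (n - 1)) : c.1 + 1 < n := by have := c.2; omega

/-- The 0-based position of the paper's index `b ∈ {1,…,n-1}` (namely `b-1`). -/
def lo (c : Fin (n - 1)) : Fin n := ⟨c.1, Nat.lt_of_succ_lt (fin_lt c)⟩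

/-- The 0-based position `b` for the paper's index `b ∈ {1,…,n-1}`. -/
def hi (c : Fin (n - 1)) : Fin n := ⟨c.1 + 1, fin_lt c⟩

/-- The action of the simple reflection `r_{c+1}` on tuples. -/
def sw (c : Fin (n - 1)) (i : Fin n → K) : Fin n → K := swapMove c.1 (fin_lt c) i

/-! ### Quiver arrows (for the quiver with arrows `i → q²i`) -/

/-- `i → j` : `j = q²i ≠ q⁻²i`. -/
def qarr (q i j : K) : Prop := j = q ^ 2 * i ∧ j ≠ (q ^ 2)⁻¹ * i

/-- `i ← j` : `j = q⁻²i ≠ q²i`. -/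
def qbak (q i j : K) : Prop := j = (q ^ 2)⁻¹ * i ∧ j ≠ q ^ 2 * i

/-- `i ↔ j` : `j = q²i = q⁻²i`. -/
def qdbl (q i j : K) : Prop := j = q ^ 2 * i ∧ j = (q ^ 2)⁻¹ * i

/-- `i ↮ j` : `i ≠ j` and `j ∉ {q²i, q⁻²i}`. -/
def qnon (q i j : K) : Prop := i ≠ j ∧ j ≠ q ^ 2 * i ∧ j ≠ (q ^ 2)⁻¹ * i

/-- `i⁻¹ →ᵖ i` : `i ∈ {±p}` and `i ∉ {±p⁻¹}`. -/
def parr (p i : K) : Prop := (i = p ∨ i = -p) ∧ ¬(i = p⁻¹ ∨ i = -p⁻¹)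

/-- `i⁻¹ ←ᵖ i` : `i ∉ {±p}` and `i ∈ {±p⁻¹}`. -/
def pbak (p i : K) : Prop := ¬(i = p ∨ i = -p) ∧ (i = p⁻¹ ∨ i = -p⁻¹)

/-- `i⁻¹ ↔ᵖ i` : `i ∈ {±p} ∩ {±p⁻¹}`. -/
def pdbl (p i : K) : Prop := (i = p ∨ i = -p) ∧ (i = p⁻¹ ∨ i = -p⁻¹)

/-- `i⁻¹ ↮ᵖ i` : `i ≠ i⁻¹` and `i ∉ {±p, ±p⁻¹}`. -/
def pnon (p i : K) : Prop := i ≠ i⁻¹ ∧ ¬(i = p ∨ i = -p ∨ i = p⁻¹ ∨ i = -p⁻¹)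

/-- The product `∏_{λ ∈ I} (x - λ)^{m(λ)}` (the factors pairwise commute). -/
def polyProd {A : Type} [Ring A] [Algebra K A] (x : A) (I : Finset K) (m : K → ℕ) : A :=
  I.noncommProd (fun lam => (x - algebraMap K A lam) ^ m lam) (by
    intro a _ b _ _
    have h1 : Commute x (algebraMap K A b) := (Algebra.commutes b x).symm
    have h2 : Commute (algebraMap K A a) x := Algebra.commutes a x
    have h3 : Commute (algebraMap K A a) (algebraMap K A b) := Algebra.commutes a _
    exact (((Commute.refl x).sub_right h1).sub_left (h2.sub_right h3)).pow_pow _ _)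

/-! ### The affine Hecke algebra of type A and its cyclotomic quotients -/

/-- Generators of the affine Hecke algebra `Ĥ(A_n)`:
`g c` is the paper's `g_{c+1}` (`c+1 ∈ {1,…,n-1}`), `X k` is `X_{k+1}`, `Xinv k` is `X_{k+1}⁻¹`. -/
inductive AGen (n : ℕ) : Type
  | g : Fin (n - 1) → AGen n
  | X : Fin n → AGen n
  | Xinv : Fin n → AGen n

def ag (c : Fin (n - 1)) : FreeAlgebra K (AGen n) := FreeAlgebra.ι K (AGen.g c)
def aX (k : Fin n) : FreeAlgebra K (AGen n) := FreeAlgebra.ι K (AGen.X k)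
def aXi (k : Fin n) : FreeAlgebra K (AGen n) := FreeAlgebra.ι K (AGen.Xinv k)

/-- Defining relations of the affine Hecke algebra `Ĥ(A_n)`. -/
inductive HARel (q : K) (n : ℕ) : FreeAlgebra K (AGen n) → FreeAlgebra K (AGen n) → Prop
  | quad (c : Fin (n - 1)) : HARel q n (ag c * ag c) ((q - q⁻¹) • ag c + 1)
  | braid (c c' : Fin (n - 1)) (h : c'.1 = c.1 + 1) :
      HARel q n (ag c * ag c' * ag c) (ag c' * ag c * ag c')
  | gcomm (c c' : Fin (n - 1)) (h : c.1 + 1 < c'.1) :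
      HARel q n (ag c * ag c') (ag c' * ag c)
  | Xcomm (k l : Fin n) : HARel q n (aX k * aX l) (aX l * aX k)
  | Xunit (k : Fin n) : HARel q n (aX k * aXi k) 1
  | Xunit' (k : Fin n) : HARel q n (aXi k * aX k) 1
  | gXg (c : Fin (n - 1)) : HARel q n (ag c * aX (lo c) * ag c) (aX (hi c))
  | gX (c : Fin (n - 1)) (k : Fin n) (h : k ≠ lo c ∧ k ≠ hi c) :
      HARel q n (ag c * aX k) (aX k * ag c)

/-- The affine Hecke algebra `Ĥ(A_n)`. -/
abbrev HeckeA (q : K) (n : ℕ) : Type := RingQuot (HARel q n)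

/-- Defining relations of the cyclotomic quotient `H(A_n)_{λ,m}`. -/
inductive HAcRel (q : K) (n : ℕ) (m : K →₀ ℕ) :
    FreeAlgebra K (AGen n) → FreeAlgebra K (AGen n) → Prop
  | ofA {a b : FreeAlgebra K (AGen n)} (h : HARel q n a b) : HAcRel q n m a b
  | cyc (h0 : 0 < n) : HAcRel q n m (polyProd (aX ⟨0, h0⟩) m.support ⇑m) 0

/-- The cyclotomic quotient `H(A_n)_{λ,m}`. -/
abbrev HeckeAc (q : K) (n : ℕ) (m : K →₀ ℕ) : Type := RingQuot (HAcRel q n m)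

/-! ### The affine Hecke algebra of type B and its cyclotomic quotients -/

inductive BGen (n : ℕ) : Type
  | g0 : BGen n
  | g : Fin (n - 1) → BGen n
  | X : Fin n → BGen n
  | Xinv : Fin n → BGen n

def bg0 : FreeAlgebra K (BGen n) := FreeAlgebra.ι K BGen.g0
def bg (c : Fin (n - 1)) : FreeAlgebra K (BGen n) := FreeAlgebra.ι K (BGen.g c)
def bX (k : Fin n) : FreeAlgebra K (BGen n) := FreeAlgebra.ι K (BGen.X k)
def bXi (k : Fin n) : FreeAlgebra K (BGen n) := FreeAlgebra.ι K (BGen.Xinv k)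

/-- Defining relations of the affine Hecke algebra `Ĥ(B_n)`. -/
inductive HBRel (p q : K) (n : ℕ) : FreeAlgebra K (BGen n) → FreeAlgebra K (BGen n) → Prop
  | quad0 : HBRel p q n (bg0 * bg0) ((p - p⁻¹) • bg0 + 1)
  | quad (c : Fin (n - 1)) : HBRel p q n (bg c * bg c) ((q - q⁻¹) • bg c + 1)
  | braid0 (h : 0 < n - 1) :
      HBRel p q n (bg0 * bg ⟨0, h⟩ * bg0 * bg ⟨0, h⟩) (bg ⟨0, h⟩ * bg0 * bg ⟨0, h⟩ * bg0)
  | braid (c c' : Fin (n - 1)) (h : c'.1 = c.1 + 1) :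
      HBRel p q n (bg c * bg c' * bg c) (bg c' * bg c * bg c')
  | gcomm (c c' : Fin (n - 1)) (h : c.1 + 1 < c'.1) :
      HBRel p q n (bg c * bg c') (bg c' * bg c)
  | g0comm (c : Fin (n - 1)) (h : 1 ≤ c.1) : HBRel p q n (bg0 * bg c) (bg c * bg0)
  | Xcomm (k l : Fin n) : HBRel p q n (bX k * bX l) (bX l * bX k)
  | Xunit (k : Fin n) : HBRel p q n (bX k * bXi k) 1
  | Xunit' (k : Fin n) : HBRel p q n (bXi k * bX k) 1
  | g0Xg0 (h0 : 0 < n) : HBRel p q n (bg0 * bXi ⟨0, h0⟩ * bg0) (bX ⟨0, h0⟩)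
  | gXg (c : Fin (n - 1)) : HBRel p q n (bg c * bX (lo c) * bg c) (bX (hi c))
  | gX (c : Fin (n - 1)) (k : Fin n) (h : k ≠ lo c ∧ k ≠ hi c) :
      HBRel p q n (bg c * bX k) (bX k * bg c)
  | g0X (k : Fin n) (h : k.1 ≠ 0) : HBRel p q n (bg0 * bX k) (bX k * bg0)

/-- The affine Hecke algebra `Ĥ(B_n)`. -/
abbrev HeckeB (p q : K) (n : ℕ) : Type := RingQuot (HBRel p q n)

/-- Defining relations of the cyclotomic quotient `H(B_n)_{λ,m}`. -/
inductive HBcRel (p q : K) (n : ℕ) (m : K →₀ ℕ) :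
    FreeAlgebra K (BGen n) → FreeAlgebra K (BGen n) → Prop
  | ofB {a b : FreeAlgebra K (BGen n)} (h : HBRel p q n a b) : HBcRel p q n m a b
  | cyc (h0 : 0 < n) : HBcRel p q n m (polyProd (bX ⟨0, h0⟩) m.support ⇑m) 0

/-- The cyclotomic quotient `H(B_n)_{λ,m}`. -/
abbrev HeckeBc (p q : K) (n : ℕ) (m : K →₀ ℕ) : Type := RingQuot (HBcRel p q n m)

/-! ### Spectral idempotent families and corner (block) algebras -/

/-- The characterizing properties of the family of idempotents `e^H(i)` projecting onto
the common generalized eigenspaces of commuting elements `Xs k` (acting by left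
multiplication): they are orthogonal idempotents summing to `1`, commuting with the
`Xs k`, with `(Xs k - i_k)` nilpotent on `E i`.  Such a family is unique. -/
def IsSpectralFamily {A : Type} [Ring A] [Algebra K A] (Xs : Fin n → A)
    (T : Finset (Fin n → K)) (E : (Fin n → K) → A) : Prop :=
  (∀ i, i ∉ T → E i = 0) ∧ (∑ i ∈ T, E i = 1) ∧
  (∀ i, E i * E i = E i) ∧ (∀ i j, i ≠ j → E i * E j = 0) ∧
  (∀ i k, Xs k * E i = E i * Xs k) ∧
  (∀ i ∈ T, ∀ k : Fin n, ∃ N : ℕ, 0 < N ∧ (Xs k - algebraMap K A (i k)) ^ N * E i = 0)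

/-- Relation identifying a central idempotent `e` with `1`. -/
def cornerRel {A : Type} [Ring A] (e : A) : A → A → Prop := fun x y => x = e ∧ y = 1

/-- For a central idempotent `e` of `A`, the corner algebra `eA` realized as the
quotient of `A` by the relation `e = 1`. -/
abbrev Corner (A : Type) [Ring A] (e : A) : Type := RingQuot (cornerRel e)

/-- Canonical algebra map `A → eA`. -/
def cornerMk {A : Type} [Ring A] [Algebra K A] (e : A) : A →ₐ[K] Corner A e :=
  RingQuot.mkAlgHom K (cornerRel e)

/-! ### Cyclotomic KLR algebras (type A quiver Hecke algebras) -/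

/-- Generators of the KLR algebra: `psi c` is the paper's `ψ_{c+1}`, `y k` is `y_{k+1}`,
`e i` for `i` in the index set `α`. -/
inductive RGen (K : Type) (n : ℕ) (α : Finset (Fin n → K)) : Type
  | psi : Fin (n - 1) → RGen K n α
  | y : Fin n → RGen K n α
  | e : {x // x ∈ α} → RGen K n α

def rψ {α : Finset (Fin n → K)} (c : Fin (n - 1)) : FreeAlgebra K (RGen K n α) :=
  FreeAlgebra.ι K (RGen.psi c)
def ry {α : Finset (Fin n → K)} (k : Fin n) : FreeAlgebra K (RGen K n α) :=
  FreeAlgebra.ι K (RGen.y k)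
def re {α : Finset (Fin n → K)} (i : {x // x ∈ α}) : FreeAlgebra K (RGen K n α) :=
  FreeAlgebra.ι K (RGen.e i)

/-- Defining relations of the cyclotomic KLR algebra `R^α_{λ,m}`. -/
inductive RRel (q : K) (n : ℕ) (α : Finset (Fin n → K)) (m : K →₀ ℕ) :
    FreeAlgebra K (RGen K n α) → FreeAlgebra K (RGen K n α) → Prop
  | esum : RRel q n α m (∑ i ∈ α.attach, re i) 1
  | eidem (i) : RRel q n α m (re i * re i) (re i)
  | eorth (i j) (h : i ≠ j) : RRel q n α m (re i * re j) 0
  | ycomm (k l : Fin n) : RRel q n α m (ry k * ry l) (ry l * ry k)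
  | ye (k : Fin n) (i) : RRel q n α m (ry k * re i) (re i * ry k)
  | psiE (c : Fin (n - 1)) (i : {x // x ∈ α}) (h' : sw c i.1 ∈ α) :
      RRel q n α m (rψ c * re i) (re ⟨sw c i.1, h'⟩ * rψ c)
  | psiyB (c : Fin (n - 1)) (i) (h : i.1 (lo c) = i.1 (hi c)) :
      RRel q n α m ((rψ c * ry (lo c) - ry (hi c) * rψ c) * re i) (-re i)
  | psiyB1 (c : Fin (n - 1)) (i) (h : i.1 (lo c) = i.1 (hi c)) :
      RRel q n α m ((rψ c * ry (hi c) - ry (lo c) * rψ c) * re i) (re i)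
  | psiyO (c : Fin (n - 1)) (i) (j : Fin n)
      (h : i.1 (lo c) ≠ i.1 (hi c) ∨ (j ≠ lo c ∧ j ≠ hi c)) :
      RRel q n α m ((rψ c * ry j - ry (Equiv.swap (lo c) (hi c) j) * rψ c) * re i) 0
  | psicomm (c c' : Fin (n - 1)) (h : c.1 + 1 < c'.1) :
      RRel q n α m (rψ c * rψ c') (rψ c' * rψ c)
  | sqEq (c : Fin (n - 1)) (i) (h : i.1 (lo c) = i.1 (hi c)) :
      RRel q n α m (rψ c * rψ c * re i) 0
  | sqNon (c : Fin (n - 1)) (i) (h : qnon q (i.1 (lo c)) (i.1 (hi c))) :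
      RRel q n α m (rψ c * rψ c * re i) (re i)
  | sqArr (c : Fin (n - 1)) (i) (h : qarr q (i.1 (lo c)) (i.1 (hi c))) :
      RRel q n α m (rψ c * rψ c * re i) ((ry (hi c) - ry (lo c)) * re i)
  | sqBak (c : Fin (n - 1)) (i) (h : qbak q (i.1 (lo c)) (i.1 (hi c))) :
      RRel q n α m (rψ c * rψ c * re i) ((ry (lo c) - ry (hi c)) * re i)
  | sqDbl (c : Fin (n - 1)) (i) (h : qdbl q (i.1 (lo c)) (i.1 (hi c))) :
      RRel q n α m (rψ c * rψ c * re i) ((ry (hi c) - ry (lo c)) * ((ry (lo c) - ry (hi c)) * re i))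
  | brArr (c c' : Fin (n - 1)) (hcc : c'.1 = c.1 + 1) (i) (h1 : i.1 (lo c) = i.1 (hi c'))
      (h2 : qarr q (i.1 (lo c)) (i.1 (hi c))) :
      RRel q n α m ((rψ c * rψ c' * rψ c - rψ c' * rψ c * rψ c') * re i) (re i)
  | brBak (c c' : Fin (n - 1)) (hcc : c'.1 = c.1 + 1) (i) (h1 : i.1 (lo c) = i.1 (hi c'))
      (h2 : qbak q (i.1 (lo c)) (i.1 (hi c))) :
      RRel q n α m ((rψ c * rψ c' * rψ c - rψ c' * rψ c * rψ c') * re i) (-re i)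
  | brDbl (c c' : Fin (n - 1)) (hcc : c'.1 = c.1 + 1) (i) (h1 : i.1 (lo c) = i.1 (hi c'))
      (h2 : qdbl q (i.1 (lo c)) (i.1 (hi c))) :
      RRel q n α m ((rψ c * rψ c' * rψ c - rψ c' * rψ c * rψ c') * re i)
        ((ry (hi c') + ry (lo c) - ry (hi c) - ry (hi c)) * re i)
  | brEls (c c' : Fin (n - 1)) (hcc : c'.1 = c.1 + 1) (i)
      (h : ¬(i.1 (lo c) = i.1 (hi c') ∧ (qarr q (i.1 (lo c)) (i.1 (hi c)) ∨
            qbak q (i.1 (lo c)) (i.1 (hi c)) ∨ qdbl q (i.1 (lo c)) (i.1 (hi c))))) :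
      RRel q n α m ((rψ c * rψ c' * rψ c - rψ c' * rψ c * rψ c') * re i) 0
  | cyc (i) (h0 : 0 < n) :
      RRel q n α m (ry ⟨0, h0⟩ ^ m (i.1 ⟨0, h0⟩) * re i) 0

/-- The cyclotomic KLR algebra `R^α_{λ,m}`. -/
abbrev KLR (q : K) (n : ℕ) (α : Finset (Fin n → K)) (m : K →₀ ℕ) : Type :=
  RingQuot (RRel q n α m)

/-! ### The generalized Varagnolo–Vasserot algebras `V^β_λ` and cyclotomic quotients -/

inductive VGen (K : Type) (n : ℕ) (β : Finset (Fin n → K)) : Type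
  | psi0 : VGen K n β
  | psi : Fin (n - 1) → VGen K n β
  | y : Fin n → VGen K n β
  | e : {x // x ∈ β} → VGen K n β

def vψ0 {β : Finset (Fin n → K)} : FreeAlgebra K (VGen K n β) := FreeAlgebra.ι K VGen.psi0
def vψ {β : Finset (Fin n → K)} (c : Fin (n - 1)) : FreeAlgebra K (VGen K n β) :=
  FreeAlgebra.ι K (VGen.psi c)
def vy {β : Finset (Fin n → K)} (k : Fin n) : FreeAlgebra K (VGen K n β) :=
  FreeAlgebra.ι K (VGen.y k)
def ve {β : Finset (Fin n → K)} (i : {x // x ∈ β}) : FreeAlgebra K (VGen K n β) :=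
  FreeAlgebra.ι K (VGen.e i)

/-- Case conditions appearing in the four-term relation (Rel:V11). -/
def c4a (q i1 i2 : K) : Prop := i1⁻¹ ≠ i1 ∧ qarr q i1 i2 ∧ i2⁻¹ = i2
def c4b (q i1 i2 : K) : Prop := i1⁻¹ ≠ i1 ∧ qbak q i1 i2 ∧ i2⁻¹ = i2
def c4c (q i1 i2 : K) : Prop := i1⁻¹ = i1 ∧ qdbl q i1 i2 ∧ i2⁻¹ = i2
def c4d (p i1 i2 : K) : Prop := i2 ≠ i1 ∧ pbak p i1⁻¹ ∧ i1⁻¹ = i2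
def c4e (p i1 i2 : K) : Prop := i2 ≠ i1 ∧ parr p i1⁻¹ ∧ i1⁻¹ = i2
def c4f (p i1 i2 : K) : Prop := i2 ≠ i1 ∧ pdbl p i1⁻¹ ∧ i1⁻¹ = i2

/-- `((ψ_0ψ_1)² - (ψ_1ψ_0)²) e(i)`. -/
def vfour {β : Finset (Fin n → K)} (h2 : 1 < n) (i : {x // x ∈ β}) :
    FreeAlgebra K (VGen K n β) :=
  (vψ0 * vψ ⟨0, by omega⟩ * vψ0 * vψ ⟨0, by omega⟩ -
    vψ ⟨0, by omega⟩ * vψ0 * vψ ⟨0, by omega⟩ * vψ0) * ve i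

/-- Defining relations of the cyclotomic quotient `V^β_{λ,m}` of the generalized
Varagnolo–Vasserot algebra (Definition 2.1 of the paper, plus the cyclotomic relation). -/
inductive VRel (p q : K) (n : ℕ) (β : Finset (Fin n → K)) (m : K →₀ ℕ) :
    FreeAlgebra K (VGen K n β) → FreeAlgebra K (VGen K n β) → Prop
  | esum : VRel p q n β m (∑ i ∈ β.attach, ve i) 1
  | eidem (i) : VRel p q n β m (ve i * ve i) (ve i)
  | eorth (i j) (h : i ≠ j) : VRel p q n β m (ve i * ve j) 0
  | ycomm (k l : Fin n) : VRel p q n β m (vy k * vy l) (vy l * vy k)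
  | ye (k : Fin n) (i) : VRel p q n β m (vy k * ve i) (ve i * vy k)
  | psiE (c : Fin (n - 1)) (i : {x // x ∈ β}) (h' : sw c i.1 ∈ β) :
      VRel p q n β m (vψ c * ve i) (ve ⟨sw c i.1, h'⟩ * vψ c)
  | psi0E (i : {x // x ∈ β}) (h0 : 0 < n) (h' : invMove h0 i.1 ∈ β) :
      VRel p q n β m (vψ0 * ve i) (ve ⟨invMove h0 i.1, h'⟩ * vψ0)
  | psiyB (c : Fin (n - 1)) (i) (h : i.1 (lo c) = i.1 (hi c)) :
      VRel p q n β m ((vψ c * vy (lo c) - vy (hi c) * vψ c) * ve i) (-ve i)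
  | psiyB1 (c : Fin (n - 1)) (i) (h : i.1 (lo c) = i.1 (hi c)) :
      VRel p q n β m ((vψ c * vy (hi c) - vy (lo c) * vψ c) * ve i) (ve i)
  | psiyO (c : Fin (n - 1)) (i) (j : Fin n)
      (h : i.1 (lo c) ≠ i.1 (hi c) ∨ (j ≠ lo c ∧ j ≠ hi c)) :
      VRel p q n β m ((vψ c * vy j - vy (Equiv.swap (lo c) (hi c) j) * vψ c) * ve i) 0
  | psicomm (c c' : Fin (n - 1)) (h : c.1 + 1 < c'.1) :
      VRel p q n β m (vψ c * vψ c') (vψ c' * vψ c)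
  | psicomm0 (c : Fin (n - 1)) (h : 1 ≤ c.1) : VRel p q n β m (vψ0 * vψ c) (vψ c * vψ0)
  | sqEq (c : Fin (n - 1)) (i) (h : i.1 (lo c) = i.1 (hi c)) :
      VRel p q n β m (vψ c * vψ c * ve i) 0
  | sqNon (c : Fin (n - 1)) (i) (h : qnon q (i.1 (lo c)) (i.1 (hi c))) :
      VRel p q n β m (vψ c * vψ c * ve i) (ve i)
  | sqArr (c : Fin (n - 1)) (i) (h : qarr q (i.1 (lo c)) (i.1 (hi c))) :
      VRel p q n β m (vψ c * vψ c * ve i) ((vy (hi c) - vy (lo c)) * ve i)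
  | sqBak (c : Fin (n - 1)) (i) (h : qbak q (i.1 (lo c)) (i.1 (hi c))) :
      VRel p q n β m (vψ c * vψ c * ve i) ((vy (lo c) - vy (hi c)) * ve i)
  | sqDbl (c : Fin (n - 1)) (i) (h : qdbl q (i.1 (lo c)) (i.1 (hi c))) :
      VRel p q n β m (vψ c * vψ c * ve i) ((vy (hi c) - vy (lo c)) * ((vy (lo c) - vy (hi c)) * ve i))
  | brArr (c c' : Fin (n - 1)) (hcc : c'.1 = c.1 + 1) (i) (h1 : i.1 (lo c) = i.1 (hi c'))
      (h2 : qarr q (i.1 (lo c)) (i.1 (hi c))) :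
      VRel p q n β m ((vψ c * vψ c' * vψ c - vψ c' * vψ c * vψ c') * ve i) (ve i)
  | brBak (c c' : Fin (n - 1)) (hcc : c'.1 = c.1 + 1) (i) (h1 : i.1 (lo c) = i.1 (hi c'))
      (h2 : qbak q (i.1 (lo c)) (i.1 (hi c))) :
      VRel p q n β m ((vψ c * vψ c' * vψ c - vψ c' * vψ c * vψ c') * ve i) (-ve i)
  | brDbl (c c' : Fin (n - 1)) (hcc : c'.1 = c.1 + 1) (i) (h1 : i.1 (lo c) = i.1 (hi c'))
      (h2 : qdbl q (i.1 (lo c)) (i.1 (hi c))) :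
      VRel p q n β m ((vψ c * vψ c' * vψ c - vψ c' * vψ c * vψ c') * ve i)
        ((vy (hi c') + vy (lo c) - vy (hi c) - vy (hi c)) * ve i)
  | brEls (c c' : Fin (n - 1)) (hcc : c'.1 = c.1 + 1) (i)
      (h : ¬(i.1 (lo c) = i.1 (hi c') ∧ (qarr q (i.1 (lo c)) (i.1 (hi c)) ∨
            qbak q (i.1 (lo c)) (i.1 (hi c)) ∨ qdbl q (i.1 (lo c)) (i.1 (hi c))))) :
      VRel p q n β m ((vψ c * vψ c' * vψ c - vψ c' * vψ c * vψ c') * ve i) 0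
  | psi0yNe (i) (h0 : 0 < n) (h : (i.1 ⟨0, h0⟩)⁻¹ ≠ i.1 ⟨0, h0⟩) :
      VRel p q n β m ((vψ0 * vy ⟨0, h0⟩ + vy ⟨0, h0⟩ * vψ0) * ve i) 0
  | psi0yEq (i) (h0 : 0 < n) (h : (i.1 ⟨0, h0⟩)⁻¹ = i.1 ⟨0, h0⟩) :
      VRel p q n β m ((vψ0 * vy ⟨0, h0⟩ + vy ⟨0, h0⟩ * vψ0) * ve i) (ve i + ve i)
  | psi0yO (k : Fin n) (h : k.1 ≠ 0) : VRel p q n β m (vψ0 * vy k) (vy k * vψ0)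
  | sq0Eq (i) (h0 : 0 < n) (h : (i.1 ⟨0, h0⟩)⁻¹ = i.1 ⟨0, h0⟩) :
      VRel p q n β m (vψ0 * vψ0 * ve i) 0
  | sq0Non (i) (h0 : 0 < n) (h : pnon p (i.1 ⟨0, h0⟩)) :
      VRel p q n β m (vψ0 * vψ0 * ve i) (ve i)
  | sq0Arr (i) (h0 : 0 < n) (h : parr p (i.1 ⟨0, h0⟩)) :
      VRel p q n β m (vψ0 * vψ0 * ve i) (vy ⟨0, h0⟩ * ve i)
  | sq0Bak (i) (h0 : 0 < n) (h : pbak p (i.1 ⟨0, h0⟩)) :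
      VRel p q n β m (vψ0 * vψ0 * ve i) (-(vy ⟨0, h0⟩ * ve i))
  | sq0Dbl (i) (h0 : 0 < n) (h : pdbl p (i.1 ⟨0, h0⟩)) :
      VRel p q n β m (vψ0 * vψ0 * ve i) (-(vy ⟨0, h0⟩ * (vy ⟨0, h0⟩ * ve i)))
  | fourA (i) (h2 : 1 < n) (h : c4a q (i.1 ⟨0, Nat.lt_of_succ_lt h2⟩) (i.1 ⟨1, h2⟩)) :
      VRel p q n β m (vfour h2 i) ((2 : K) • (vψ0 * ve i))
  | fourB (i) (h2 : 1 < n) (h : c4b q (i.1 ⟨0, Nat.lt_of_succ_lt h2⟩) (i.1 ⟨1, h2⟩)) :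
      VRel p q n β m (vfour h2 i) (-((2 : K) • (vψ0 * ve i)))
  | fourC (i) (h2 : 1 < n) (h : c4c q (i.1 ⟨0, Nat.lt_of_succ_lt h2⟩) (i.1 ⟨1, h2⟩)) :
      VRel p q n β m (vfour h2 i) ((4 : K) • ((vψ0 * vy ⟨0, Nat.lt_of_succ_lt h2⟩ - 1) * ve i))
  | fourD (i) (h2 : 1 < n) (h : c4d p (i.1 ⟨0, Nat.lt_of_succ_lt h2⟩) (i.1 ⟨1, h2⟩)) :
      VRel p q n β m (vfour h2 i) (-(vψ ⟨0, by omega⟩ * ve i))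
  | fourE (i) (h2 : 1 < n) (h : c4e p (i.1 ⟨0, Nat.lt_of_succ_lt h2⟩) (i.1 ⟨1, h2⟩)) :
      VRel p q n β m (vfour h2 i) (vψ ⟨0, by omega⟩ * ve i)
  | fourF (i) (h2 : 1 < n) (h : c4f p (i.1 ⟨0, Nat.lt_of_succ_lt h2⟩) (i.1 ⟨1, h2⟩)) :
      VRel p q n β m (vfour h2 i)
        (vψ ⟨0, by omega⟩ * ((vy ⟨0, Nat.lt_of_succ_lt h2⟩ - vy ⟨1, h2⟩) * ve i))
  | fourG (i) (h2 : 1 < n)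
      (h : ¬c4a q (i.1 ⟨0, Nat.lt_of_succ_lt h2⟩) (i.1 ⟨1, h2⟩) ∧
           ¬c4b q (i.1 ⟨0, Nat.lt_of_succ_lt h2⟩) (i.1 ⟨1, h2⟩) ∧
           ¬c4c q (i.1 ⟨0, Nat.lt_of_succ_lt h2⟩) (i.1 ⟨1, h2⟩) ∧
           ¬c4d p (i.1 ⟨0, Nat.lt_of_succ_lt h2⟩) (i.1 ⟨1, h2⟩) ∧
           ¬c4e p (i.1 ⟨0, Nat.lt_of_succ_lt h2⟩) (i.1 ⟨1, h2⟩) ∧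
           ¬c4f p (i.1 ⟨0, Nat.lt_of_succ_lt h2⟩) (i.1 ⟨1, h2⟩)) :
      VRel p q n β m (vfour h2 i) 0
  | cyc (i) (h0 : 0 < n) :
      VRel p q n β m (vy ⟨0, h0⟩ ^ m (i.1 ⟨0, h0⟩) * ve i) 0

/-- The cyclotomic quotient `V^β_{λ,m}` of the generalized Varagnolo–Vasserot algebra. -/
abbrev VB (p q : K) (n : ℕ) (β : Finset (Fin n → K)) (m : K →₀ ℕ) : Type :=
  RingQuot (VRel p q n β m)

/-! ### Laurent monomials and the intermediary algebras `𝕀_{N,A}` and `𝕀_N` -/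

/-- Given elements `X k` with formal inverses `Xi k`, the monomial `X^x` for `x ∈ ℤ^n`. -/
def XmonOf {F : Type} [Monoid F] (X Xi : Fin n → F) (x : Fin n → ℤ) : F :=
  ((List.finRange n).map fun k => if 0 ≤ x k then X k ^ (x k).toNat
    else Xi k ^ (-x k).toNat).prod

/-- The Laurent polynomial `(X^x - X^{x - tα})/(1 - X^{-α})` (a geometric sum). -/
def divMonOf {F : Type} [Ring F] (X Xi : Fin n → F) (x αv : Fin n → ℤ) (t : ℤ) : F :=
  if 0 ≤ t then ∑ j ∈ Finset.range t.toNat, XmonOf X Xi (x - (j : ℤ) • αv)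
  else -∑ j ∈ Finset.range (-t).toNat, XmonOf X Xi (x + ((j : ℤ) + 1) • αv)

/-- The root `α_b = ε_{b+1} - ε_b` as an exponent vector. -/
def alC (c : Fin (n - 1)) : Fin n → ℤ := fun k => if k = hi c then 1 else if k = lo c then -1 else 0

/-- The root `α_0 = 2ε_1` as an exponent vector. -/
def alB : Fin n → ℤ := fun k => if k.1 = 0 then 2 else 0

/-- Action of `r_0` on exponent vectors. -/
def rx0 (x : Fin n → ℤ) : Fin n → ℤ := fun k => if k.1 = 0 then -x k else x k

/-- Action of the simple transposition `r_{c+1}` on exponent vectors. -/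
def rxC (c : Fin (n - 1)) (x : Fin n → ℤ) : Fin n → ℤ := x ∘ Equiv.swap (lo c) (hi c)

/-- `-α_1` as an exponent vector (so `X^{-α_1} = X_1X_2⁻¹`). -/
def mA1 : Fin n → ℤ := fun k => if k.1 = 0 then 1 else if k.1 = 1 then -1 else 0
/-- `-r_0(α_1)` as an exponent vector (so `X^{-r_0(α_1)} = X_1⁻¹X_2⁻¹`). -/
def mR0A1 : Fin n → ℤ := fun k => if k.1 = 0 then -1 else if k.1 = 1 then -1 else 0
/-- `-r_1(α_0)` as an exponent vector (so `X^{-r_1(α_0)} = X_2⁻²`). -/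
def mR1A0 : Fin n → ℤ := fun k => if k.1 = 1 then -2 else 0
/-- `-α_0` as an exponent vector (so `X^{-α_0} = X_1⁻²`). -/
def mA0 : Fin n → ℤ := fun k => if k.1 = 0 then -2 else 0

/-- Generators of the intermediary algebra `𝕀_{N,A}` of Section 5 (restricted to type A). -/
inductive IAGen (K : Type) (n : ℕ) (α : Finset (Fin n → K)) : Type
  | phi : Fin (n - 1) → IAGen K n α
  | X : Fin n → IAGen K n α
  | Xinv : Fin n → IAGen K n α
  | e : {x // x ∈ α} → IAGen K n α

def tφ {α : Finset (Fin n → K)} (c : Fin (n - 1)) : FreeAlgebra K (IAGen K n α) :=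
  FreeAlgebra.ι K (IAGen.phi c)
def tX {α : Finset (Fin n → K)} (k : Fin n) : FreeAlgebra K (IAGen K n α) :=
  FreeAlgebra.ι K (IAGen.X k)
def tXi {α : Finset (Fin n → K)} (k : Fin n) : FreeAlgebra K (IAGen K n α) :=
  FreeAlgebra.ι K (IAGen.Xinv k)
def te {α : Finset (Fin n → K)} (i : {x // x ∈ α}) : FreeAlgebra K (IAGen K n α) :=
  FreeAlgebra.ι K (IAGen.e i)

/-- The "commutative part" of the relations of `𝕀_{N,A}`: relations among the `X`'s and
the idempotents `e(i)`, including the cyclotomic relation `(X_1 - i_1)^{m(i_1)}e(i) = 0`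
and the nilpotency relations `(X_k - i_k)^N e(i) = 0` for `k ≥ 2`. -/
inductive XARel (n : ℕ) (α : Finset (Fin n → K)) (m : K →₀ ℕ) (N : ℕ) :
    FreeAlgebra K (IAGen K n α) → FreeAlgebra K (IAGen K n α) → Prop
  | Xcomm (k l : Fin n) : XARel n α m N (tX k * tX l) (tX l * tX k)
  | Xunit (k : Fin n) : XARel n α m N (tX k * tXi k) 1
  | Xunit' (k : Fin n) : XARel n α m N (tXi k * tX k) 1
  | esum : XARel n α m N (∑ i ∈ α.attach, te i) 1
  | eidem (i) : XARel n α m N (te i * te i) (te i)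
  | eorth (i j) (h : i ≠ j) : XARel n α m N (te i * te j) 0
  | Xe (k : Fin n) (i) : XARel n α m N (tX k * te i) (te i * tX k)
  | cyc (i) (h0 : 0 < n) :
      XARel n α m N ((tX ⟨0, h0⟩ - algebraMap K (FreeAlgebra K (IAGen K n α)) (i.1 ⟨0, h0⟩)) ^
        m (i.1 ⟨0, h0⟩) * te i) 0
  | nil (i) (k : Fin n) (h : k.1 ≠ 0) :
      XARel n α m N ((tX k - algebraMap K (FreeAlgebra K (IAGen K n α)) (i.1 k)) ^ N * te i) 0

/-- Defining relations of the intermediary algebra `𝕀_{N,A}`.  Partial inverses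
`(⋯)⁻¹e(i)` appearing in the relations of Definition 5.1 are handled by quantifying over
all elements `Z` which invert the relevant denominator `e(i)`-locally, modulo the
commutative relations `XARel` (such a `Z` exists and its class is unique, by the
nilpotency relations). -/
inductive IARel (q : K) (n : ℕ) (α : Finset (Fin n → K)) (m : K →₀ ℕ) (N : ℕ) :
    FreeAlgebra K (IAGen K n α) → FreeAlgebra K (IAGen K n α) → Prop
  | ofX {a b : FreeAlgebra K (IAGen K n α)} (h : XARel n α m N a b) : IARel q n α m N a b
  | phiE (c : Fin (n - 1)) (i : {x // x ∈ α}) (h' : sw c i.1 ∈ α) :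
      IARel q n α m N (tφ c * te i) (te ⟨sw c i.1, h'⟩ * tφ c)
  | phiXne (c : Fin (n - 1)) (i) (x : Fin n → ℤ) (h : i.1 (lo c) ≠ i.1 (hi c)) :
      IARel q n α m N ((tφ c * XmonOf tX tXi x - XmonOf tX tXi (rxC c x) * tφ c) * te i) 0
  | phiXeq (c : Fin (n - 1)) (i) (x : Fin n → ℤ) (h : i.1 (lo c) = i.1 (hi c)) :
      IARel q n α m N ((tφ c * XmonOf tX tXi x - XmonOf tX tXi (rxC c x) * tφ c) * te i)
        ((q • (1 : FreeAlgebra K (IAGen K n α)) - q⁻¹ • XmonOf tX tXi (-alC c)) *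
          (divMonOf tX tXi x (alC c) (x (hi c) - x (lo c)) * te i))
  | phicomm (c c' : Fin (n - 1)) (h : c.1 + 1 < c'.1) :
      IARel q n α m N (tφ c * tφ c') (tφ c' * tφ c)
  | phisqEq (c : Fin (n - 1)) (i) (h : i.1 (lo c) = i.1 (hi c)) :
      IARel q n α m N (tφ c * tφ c * te i) ((q + q⁻¹) • (tφ c * te i))
  | phisqNe (c : Fin (n - 1)) (i) (h : i.1 (lo c) ≠ i.1 (hi c))
      (Z : FreeAlgebra K (IAGen K n α))
      (hZ : RingQuot.mkAlgHom K (XARel n α m N)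
          ((1 - XmonOf tX tXi (alC c)) * ((1 - XmonOf tX tXi (-alC c)) * (Z * te i))) =
        RingQuot.mkAlgHom K (XARel n α m N) (te i)) :
      IARel q n α m N (tφ c * tφ c * te i) (te i + ((q - q⁻¹) ^ 2) • (Z * te i))
  | phibrEq (c c' : Fin (n - 1)) (hcc : c'.1 = c.1 + 1) (i)
      (h1 : i.1 (lo c) = i.1 (hi c)) (h2 : i.1 (hi c) = i.1 (hi c')) :
      IARel q n α m N ((tφ c * tφ c' * tφ c - tφ c' * tφ c * tφ c') * te i)
        ((tφ c - tφ c') * te i)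
  | phibrNe (c c' : Fin (n - 1)) (hcc : c'.1 = c.1 + 1) (i)
      (h1 : i.1 (lo c) = i.1 (hi c')) (h2 : i.1 (lo c) ≠ i.1 (hi c))
      (Z : FreeAlgebra K (IAGen K n α))
      (hZ : RingQuot.mkAlgHom K (XARel n α m N)
          ((1 - XmonOf tX tXi (-alC c)) ^ 2 * ((1 - XmonOf tX tXi (-alC c')) ^ 2 * (Z * te i))) =
        RingQuot.mkAlgHom K (XARel n α m N) (te i)) :
      IARel q n α m N ((tφ c * tφ c' * tφ c - tφ c' * tφ c * tφ c') * te i)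
        (((q - q⁻¹) ^ 2) • ((XmonOf tX tXi (-alC c') - XmonOf tX tXi (-alC c)) *
          ((q • (1 : FreeAlgebra K (IAGen K n α)) - q⁻¹ • XmonOf tX tXi (-alC c - alC c')) *
            (Z * te i))))
  | phibrEls (c c' : Fin (n - 1)) (hcc : c'.1 = c.1 + 1) (i) (h : i.1 (lo c) ≠ i.1 (hi c')) :
      IARel q n α m N ((tφ c * tφ c' * tφ c - tφ c' * tφ c * tφ c') * te i) 0

/-- The intermediary algebra `𝕀_{N,A}`. -/
abbrev IA (q : K) (n : ℕ) (α : Finset (Fin n → K)) (m : K →₀ ℕ) (N : ℕ) : Type :=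
  RingQuot (IARel q n α m N)

/-- Generators of the intermediary algebra `𝕀_N` of Definition 5.1. -/
inductive IBGen (K : Type) (n : ℕ) (β : Finset (Fin n → K)) : Type
  | phi0 : IBGen K n β
  | phi : Fin (n - 1) → IBGen K n β
  | X : Fin n → IBGen K n β
  | Xinv : Fin n → IBGen K n β
  | e : {x // x ∈ β} → IBGen K n β

def uφ0 {β : Finset (Fin n → K)} : FreeAlgebra K (IBGen K n β) := FreeAlgebra.ι K IBGen.phi0
def uφ {β : Finset (Fin n → K)} (c : Fin (n - 1)) : FreeAlgebra K (IBGen K n β) :=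
  FreeAlgebra.ι K (IBGen.phi c)
def uX {β : Finset (Fin n → K)} (k : Fin n) : FreeAlgebra K (IBGen K n β) :=
  FreeAlgebra.ι K (IBGen.X k)
def uXi {β : Finset (Fin n → K)} (k : Fin n) : FreeAlgebra K (IBGen K n β) :=
  FreeAlgebra.ι K (IBGen.Xinv k)
def ue {β : Finset (Fin n → K)} (i : {x // x ∈ β}) : FreeAlgebra K (IBGen K n β) :=
  FreeAlgebra.ι K (IBGen.e i)

/-- The "commutative part" of the relations of `𝕀_N`. -/
inductive XBRel (n : ℕ) (β : Finset (Fin n → K)) (m : K →₀ ℕ) (N : ℕ) :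
    FreeAlgebra K (IBGen K n β) → FreeAlgebra K (IBGen K n β) → Prop
  | Xcomm (k l : Fin n) : XBRel n β m N (uX k * uX l) (uX l * uX k)
  | Xunit (k : Fin n) : XBRel n β m N (uX k * uXi k) 1
  | Xunit' (k : Fin n) : XBRel n β m N (uXi k * uX k) 1
  | esum : XBRel n β m N (∑ i ∈ β.attach, ue i) 1
  | eidem (i) : XBRel n β m N (ue i * ue i) (ue i)
  | eorth (i j) (h : i ≠ j) : XBRel n β m N (ue i * ue j) 0
  | Xe (k : Fin n) (i) : XBRel n β m N (uX k * ue i) (ue i * uX k)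
  | cyc (i) (h0 : 0 < n) :
      XBRel n β m N ((uX ⟨0, h0⟩ - algebraMap K (FreeAlgebra K (IBGen K n β)) (i.1 ⟨0, h0⟩)) ^
        m (i.1 ⟨0, h0⟩) * ue i) 0
  | nil (i) (k : Fin n) (h : k.1 ≠ 0) :
      XBRel n β m N ((uX k - algebraMap K (FreeAlgebra K (IBGen K n β)) (i.1 k)) ^ N * ue i) 0

/-- Case conditions for the modified four-term braid relation of Definition 5.1. -/
def ib4c1 (i1 i2 : K) : Prop := i1 = i2 ∧ i1 ^ 2 = 1 ∧ i2 ^ 2 = 1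
def ib4c2 (i1 i2 : K) : Prop := i1 ≠ i2 ∧ i1 ^ 2 = 1 ∧ i2 ^ 2 = 1
def ib4c3 (i1 i2 : K) : Prop := i1 ≠ i2 ∧ i1 ^ 2 ≠ 1 ∧ i2 ^ 2 = 1
def ib4c4 (i1 i2 : K) : Prop := i1 ≠ i2 ∧ i1 ^ 2 ≠ 1 ∧ i1⁻¹ = i2

/-- `(Φ_0Φ_1Φ_0Φ_1 - Φ_1Φ_0Φ_1Φ_0) e(i)`. -/
def ufour {β : Finset (Fin n → K)} (h2 : 1 < n) (i : {x // x ∈ β}) :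
    FreeAlgebra K (IBGen K n β) :=
  (uφ0 * uφ ⟨0, by omega⟩ * uφ0 * uφ ⟨0, by omega⟩ -
    uφ ⟨0, by omega⟩ * uφ0 * uφ ⟨0, by omega⟩ * uφ0) * ue i

/-- Defining relations of the intermediary algebra `𝕀_N` (Definition 5.1).  Partial
inverses `(⋯)⁻¹e(i)` are handled by quantifying over all local inverses `Z` modulo the
commutative relations `XBRel`; for the elements `Z_b`, `Y_0`, `Y_1` we use the
cancelled expressions (Z-Y) of Remark 5.3. -/
inductive IBRel (p q : K) (n : ℕ) (β : Finset (Fin n → K)) (m : K →₀ ℕ) (N : ℕ) :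
    FreeAlgebra K (IBGen K n β) → FreeAlgebra K (IBGen K n β) → Prop
  | ofX {a b : FreeAlgebra K (IBGen K n β)} (h : XBRel n β m N a b) : IBRel p q n β m N a b
  | phiE (c : Fin (n - 1)) (i : {x // x ∈ β}) (h' : sw c i.1 ∈ β) :
      IBRel p q n β m N (uφ c * ue i) (ue ⟨sw c i.1, h'⟩ * uφ c)
  | phi0E (i : {x // x ∈ β}) (h0 : 0 < n) (h' : invMove h0 i.1 ∈ β) :
      IBRel p q n β m N (uφ0 * ue i) (ue ⟨invMove h0 i.1, h'⟩ * uφ0)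
  | phiXne (c : Fin (n - 1)) (i) (x : Fin n → ℤ) (h : i.1 (lo c) ≠ i.1 (hi c)) :
      IBRel p q n β m N ((uφ c * XmonOf uX uXi x - XmonOf uX uXi (rxC c x) * uφ c) * ue i) 0
  | phiXeq (c : Fin (n - 1)) (i) (x : Fin n → ℤ) (h : i.1 (lo c) = i.1 (hi c)) :
      IBRel p q n β m N ((uφ c * XmonOf uX uXi x - XmonOf uX uXi (rxC c x) * uφ c) * ue i)
        ((q • (1 : FreeAlgebra K (IBGen K n β)) - q⁻¹ • XmonOf uX uXi (-alC c)) *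
          (divMonOf uX uXi x (alC c) (x (hi c) - x (lo c)) * ue i))
  | phi0Xne (i) (x : Fin n → ℤ) (h0 : 0 < n) (h : (i.1 ⟨0, h0⟩)⁻¹ ≠ i.1 ⟨0, h0⟩) :
      IBRel p q n β m N ((uφ0 * XmonOf uX uXi x - XmonOf uX uXi (rx0 x) * uφ0) * ue i) 0
  | phi0Xeq (i) (x : Fin n → ℤ) (h0 : 0 < n) (h : (i.1 ⟨0, h0⟩)⁻¹ = i.1 ⟨0, h0⟩) :
      IBRel p q n β m N ((uφ0 * XmonOf uX uXi x - XmonOf uX uXi (rx0 x) * uφ0) * ue i)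
        ((p • (1 : FreeAlgebra K (IBGen K n β)) - p⁻¹ • XmonOf uX uXi mA0) *
          (divMonOf uX uXi x alB (x ⟨0, h0⟩) * ue i))
  | phicomm (c c' : Fin (n - 1)) (h : c.1 + 1 < c'.1) :
      IBRel p q n β m N (uφ c * uφ c') (uφ c' * uφ c)
  | phi0comm (c : Fin (n - 1)) (h : 1 ≤ c.1) : IBRel p q n β m N (uφ0 * uφ c) (uφ c * uφ0)
  | phisqEq (c : Fin (n - 1)) (i) (h : i.1 (lo c) = i.1 (hi c)) :
      IBRel p q n β m N (uφ c * uφ c * ue i) ((q + q⁻¹) • (uφ c * ue i))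
  | phisqNe (c : Fin (n - 1)) (i) (h : i.1 (lo c) ≠ i.1 (hi c))
      (Z : FreeAlgebra K (IBGen K n β))
      (hZ : RingQuot.mkAlgHom K (XBRel n β m N)
          ((1 - XmonOf uX uXi (alC c)) * ((1 - XmonOf uX uXi (-alC c)) * (Z * ue i))) =
        RingQuot.mkAlgHom K (XBRel n β m N) (ue i)) :
      IBRel p q n β m N (uφ c * uφ c * ue i)
        ((q • (1 : FreeAlgebra K (IBGen K n β)) - q⁻¹ • XmonOf uX uXi (alC c)) *
          ((q • (1 : FreeAlgebra K (IBGen K n β)) - q⁻¹ • XmonOf uX uXi (-alC c)) *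
            (Z * ue i)))
  | phi0sqEq (i) (h0 : 0 < n) (h : (i.1 ⟨0, h0⟩)⁻¹ = i.1 ⟨0, h0⟩) :
      IBRel p q n β m N (uφ0 * uφ0 * ue i) ((p + p⁻¹) • (uφ0 * ue i))
  | phi0sqNe (i) (h0 : 0 < n) (h : (i.1 ⟨0, h0⟩)⁻¹ ≠ i.1 ⟨0, h0⟩)
      (Z : FreeAlgebra K (IBGen K n β))
      (hZ : RingQuot.mkAlgHom K (XBRel n β m N)
          ((1 - XmonOf uX uXi alB) * ((1 - XmonOf uX uXi mA0) * (Z * ue i))) =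
        RingQuot.mkAlgHom K (XBRel n β m N) (ue i)) :
      IBRel p q n β m N (uφ0 * uφ0 * ue i)
        ((p • (1 : FreeAlgebra K (IBGen K n β)) - p⁻¹ • XmonOf uX uXi alB) *
          ((p • (1 : FreeAlgebra K (IBGen K n β)) - p⁻¹ • XmonOf uX uXi mA0) *
            (Z * ue i)))
  | phibrEq (c c' : Fin (n - 1)) (hcc : c'.1 = c.1 + 1) (i)
      (h1 : i.1 (lo c) = i.1 (hi c)) (h2 : i.1 (hi c) = i.1 (hi c')) :
      IBRel p q n β m N ((uφ c * uφ c' * uφ c - uφ c' * uφ c * uφ c') * ue i)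
        ((uφ c - uφ c') * ue i)
  | phibrNe (c c' : Fin (n - 1)) (hcc : c'.1 = c.1 + 1) (i)
      (h1 : i.1 (lo c) = i.1 (hi c')) (h2 : i.1 (lo c) ≠ i.1 (hi c))
      (Z : FreeAlgebra K (IBGen K n β))
      (hZ : RingQuot.mkAlgHom K (XBRel n β m N)
          ((1 - XmonOf uX uXi (-alC c)) ^ 2 * ((1 - XmonOf uX uXi (-alC c')) ^ 2 * (Z * ue i))) =
        RingQuot.mkAlgHom K (XBRel n β m N) (ue i)) :
      IBRel p q n β m N ((uφ c * uφ c' * uφ c - uφ c' * uφ c * uφ c') * ue i)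
        (((q - q⁻¹) ^ 2) • ((XmonOf uX uXi (-alC c') - XmonOf uX uXi (-alC c)) *
          ((q • (1 : FreeAlgebra K (IBGen K n β)) - q⁻¹ • XmonOf uX uXi (-alC c - alC c')) *
            (Z * ue i))))
  | phibrEls (c c' : Fin (n - 1)) (hcc : c'.1 = c.1 + 1) (i) (h : i.1 (lo c) ≠ i.1 (hi c')) :
      IBRel p q n β m N ((uφ c * uφ c' * uφ c - uφ c' * uφ c * uφ c') * ue i) 0
  | four1 (i) (h2 : 1 < n) (h : ib4c1 (i.1 ⟨0, Nat.lt_of_succ_lt h2⟩) (i.1 ⟨1, h2⟩)) :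
      IBRel p q n β m N (ufour h2 i)
        ((p * q⁻¹ + p⁻¹ * q) • ((uφ0 * uφ ⟨0, by omega⟩ - uφ ⟨0, by omega⟩ * uφ0) * ue i))
  | four2 (i) (h2 : 1 < n) (h : ib4c2 (i.1 ⟨0, Nat.lt_of_succ_lt h2⟩) (i.1 ⟨1, h2⟩))
      (Z : FreeAlgebra K (IBGen K n β))
      (hZ : RingQuot.mkAlgHom K (XBRel n β m N)
          ((1 - XmonOf uX uXi mA1) ^ 2 * ((1 - XmonOf uX uXi mR0A1) ^ 2 * (Z * ue i))) =
        RingQuot.mkAlgHom K (XBRel n β m N) (ue i)) :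
      IBRel p q n β m N (ufour h2 i)
        (-(((q - q⁻¹) ^ 2) •
          ((uφ0 * (1 - XmonOf uX uXi mA0) -
              (p • (1 : FreeAlgebra K (IBGen K n β)) - p⁻¹ • XmonOf uX uXi mA0)) *
            (XmonOf uX uXi mA1 *
              ((p • (1 : FreeAlgebra K (IBGen K n β)) - p⁻¹ • XmonOf uX uXi mR1A0) *
                (Z * ue i))))))
  | four3 (i) (h2 : 1 < n) (h : ib4c3 (i.1 ⟨0, Nat.lt_of_succ_lt h2⟩) (i.1 ⟨1, h2⟩))
      (Z : FreeAlgebra K (IBGen K n β))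
      (hZ : RingQuot.mkAlgHom K (XBRel n β m N)
          ((1 - XmonOf uX uXi mA1) ^ 2 * ((1 - XmonOf uX uXi mR0A1) ^ 2 * (Z * ue i))) =
        RingQuot.mkAlgHom K (XBRel n β m N) (ue i)) :
      IBRel p q n β m N (ufour h2 i)
        (-(((q - q⁻¹) ^ 2) •
          (uφ0 * ((1 - XmonOf uX uXi mA0) *
            (XmonOf uX uXi mA1 *
              ((p • (1 : FreeAlgebra K (IBGen K n β)) - p⁻¹ • XmonOf uX uXi mR1A0) *
                (Z * ue i)))))))
  | four4 (i) (h2 : 1 < n) (h : ib4c4 (i.1 ⟨0, Nat.lt_of_succ_lt h2⟩) (i.1 ⟨1, h2⟩))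
      (Z : FreeAlgebra K (IBGen K n β))
      (hZ : RingQuot.mkAlgHom K (XBRel n β m N)
          ((1 - XmonOf uX uXi mA0) ^ 2 * ((1 - XmonOf uX uXi mR1A0) ^ 2 * (Z * ue i))) =
        RingQuot.mkAlgHom K (XBRel n β m N) (ue i)) :
      IBRel p q n β m N (ufour h2 i)
        (((p - p⁻¹) ^ 2) •
          (uφ ⟨0, by omega⟩ * ((1 - XmonOf uX uXi mA1) *
            (XmonOf uX uXi mA0 * ((1 + XmonOf uX uXi mA1) *
              ((1 + XmonOf uX uXi mR0A1) *
                ((q • (1 : FreeAlgebra K (IBGen K n β)) - q⁻¹ • XmonOf uX uXi mR0A1) *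
                  (Z * ue i))))))))
  | four5 (i) (h2 : 1 < n)
      (h : ¬ib4c1 (i.1 ⟨0, Nat.lt_of_succ_lt h2⟩) (i.1 ⟨1, h2⟩) ∧
           ¬ib4c2 (i.1 ⟨0, Nat.lt_of_succ_lt h2⟩) (i.1 ⟨1, h2⟩) ∧
           ¬ib4c3 (i.1 ⟨0, Nat.lt_of_succ_lt h2⟩) (i.1 ⟨1, h2⟩) ∧
           ¬ib4c4 (i.1 ⟨0, Nat.lt_of_succ_lt h2⟩) (i.1 ⟨1, h2⟩)) :
      IBRel p q n β m N (ufour h2 i) 0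

/-- The intermediary algebra `𝕀_N` of Definition 5.1. -/
abbrev IB (p q : K) (n : ℕ) (β : Finset (Fin n → K)) (m : K →₀ ℕ) (N : ℕ) : Type :=
  RingQuot (IBRel p q n β m N)

/-! ### Formal power series helpers -/

/-- Composition `f ∘ g` of univariate power series (intended for `g` with zero constant
term, in which case this is the substitution of `g` into `f`). -/
def comp1 (f g : PowerSeries K) : PowerSeries K :=
  PowerSeries.mk fun d => ∑ k ∈ Finset.range (d + 1),
    PowerSeries.coeff (R := K) k f * PowerSeries.coeff (R := K) d (g ^ k)

/-- The power series `f(z) = z + z/(1-z)` used for the type B isomorphism. -/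
def fVV : PowerSeries K := PowerSeries.X + PowerSeries.X * (1 - PowerSeries.X)⁻¹

/-- The embedding `K[[z]] → K[[y_1,…,y_n]]`, `z ↦ y_a`. -/
def emb1 (a : Fin n) (h : PowerSeries K) : MvPowerSeries (Fin n) K :=
  fun d => if d.support ⊆ {a} then PowerSeries.coeff (R := K) (d a) h else 0

/-- The embedding `K[[z,z']] → K[[y_1,…,y_n]]`, `z ↦ y_a`, `z' ↦ y_b` (for `a ≠ b`). -/
def emb2 (a b : Fin n) (P : MvPowerSeries (Fin 2) K) : MvPowerSeries (Fin n) K :=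
  fun d => if d.support ⊆ {a, b} then
    MvPowerSeries.coeff (R := K) (Finsupp.single 0 (d a) + Finsupp.single 1 (d b)) P else 0

/-- The action of a permutation of the variables on `K[[y_1,…,y_n]]`. -/
def permPS (σ : Equiv.Perm (Fin n)) (P : MvPowerSeries (Fin n) K) :
    MvPowerSeries (Fin n) K :=
  fun d => MvPowerSeries.coeff (R := K) (Finsupp.equivMapDomain σ d) P

/-- The action of `r_0` (`y_1 ↦ -y_1`) on `K[[y_1,…,y_n]]`. -/
def negFirst (h0 : 0 < n) (P : MvPowerSeries (Fin n) K) : MvPowerSeries (Fin n) K :=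
  fun d => (-1 : K) ^ d ⟨0, h0⟩ * MvPowerSeries.coeff (R := K) d P

/-- `X_k(i) = i_k (1 - g(y_k))` as an element of `K[[y_1,…,y_n]]`. -/
def XofI (g : PowerSeries K) (i : Fin n → K) (k : Fin n) : MvPowerSeries (Fin n) K :=
  MvPowerSeries.C (σ := Fin n) (R := K) (i k) * (1 - emb1 k g)

/-- `X̄_1(i) = X_1(i)⁻¹ = i_1⁻¹ (1 - g(y_1))⁻¹`. -/
def XbarofI (g : PowerSeries K) (i : Fin n → K) (h0 : 0 < n) : MvPowerSeries (Fin n) K :=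
  MvPowerSeries.C (σ := Fin n) (R := K) (i ⟨0, h0⟩)⁻¹ * (1 - emb1 ⟨0, h0⟩ g)⁻¹

/-- The evaluated series `Q_k(i) ∈ K[[y_k, y_{k+1}]] ⊆ K[[y_1,…,y_n]]`. -/
def Qev {n : ℕ} (Q : Fin (n - 1) → K → K → MvPowerSeries (Fin 2) K)
    (c : Fin (n - 1)) (i : Fin n → K) : MvPowerSeries (Fin n) K :=
  emb2 (lo c) (hi c) (Q c (i (lo c)) (i (hi c)))

/-- Condition (★1). -/
def Star1 (q : K) (g : PowerSeries K) (S : Set K) (n : ℕ)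
    (Q : Fin (n - 1) → K → K → MvPowerSeries (Fin 2) K) : Prop :=
  ∀ i : Fin n → K, (∀ k, i k ∈ S) → ∀ c : Fin (n - 1), i (lo c) = i (hi c) →
    Qev Q c i * (emb1 (hi c) g - emb1 (lo c) g) =
      MvPowerSeries.C (σ := Fin n) (R := K) (i (lo c))⁻¹ *
        ((MvPowerSeries.C (σ := Fin n) (R := K) q⁻¹ * XofI g i (lo c) -
            MvPowerSeries.C (σ := Fin n) (R := K) q * XofI g i (hi c)) *
          (MvPowerSeries.X (hi c) - MvPowerSeries.X (lo c)))

/-- The product `{}^{r_k}Q_k(r_k(i)) ⋅ Q_k(i)`. -/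
def QQ2 {n : ℕ} (Q : Fin (n - 1) → K → K → MvPowerSeries (Fin 2) K)
    (c : Fin (n - 1)) (i : Fin n → K) : MvPowerSeries (Fin n) K :=
  permPS (Equiv.swap (lo c) (hi c)) (Qev Q c (sw c i)) * Qev Q c i

/-- `(X_k(i) - X_{k+1}(i))(X_{k+1}(i) - X_k(i))`. -/
def DD2 (g : PowerSeries K) (i : Fin n → K) (c : Fin (n - 1)) : MvPowerSeries (Fin n) K :=
  (XofI g i (lo c) - XofI g i (hi c)) * (XofI g i (hi c) - XofI g i (lo c))

/-- `(qX_k(i) - q⁻¹X_{k+1}(i))(qX_{k+1}(i) - q⁻¹X_k(i))`. -/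
def NN2 (q : K) (g : PowerSeries K) (i : Fin n → K) (c : Fin (n - 1)) :
    MvPowerSeries (Fin n) K :=
  (MvPowerSeries.C (σ := Fin n) (R := K) q * XofI g i (lo c) -
      MvPowerSeries.C (σ := Fin n) (R := K) q⁻¹ * XofI g i (hi c)) *
    (MvPowerSeries.C (σ := Fin n) (R := K) q * XofI g i (hi c) -
      MvPowerSeries.C (σ := Fin n) (R := K) q⁻¹ * XofI g i (lo c))

/-- Condition (★2). -/
def Star2 (q : K) (g : PowerSeries K) (S : Set K) (n : ℕ)
    (Q : Fin (n - 1) → K → K → MvPowerSeries (Fin 2) K) : Prop :=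
  ∀ i : Fin n → K, (∀ k, i k ∈ S) → ∀ c : Fin (n - 1),
    (qnon q (i (lo c)) (i (hi c)) → QQ2 Q c i * DD2 g i c = NN2 q g i c) ∧
    (qbak q (i (lo c)) (i (hi c)) →
      QQ2 Q c i * ((MvPowerSeries.X (hi c) - MvPowerSeries.X (lo c)) * DD2 g i c) =
        NN2 q g i c) ∧
    (qarr q (i (lo c)) (i (hi c)) →
      QQ2 Q c i * ((MvPowerSeries.X (lo c) - MvPowerSeries.X (hi c)) * DD2 g i c) =
        NN2 q g i c) ∧
    (qdbl q (i (lo c)) (i (hi c)) →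
      QQ2 Q c i * ((MvPowerSeries.X (hi c) - MvPowerSeries.X (lo c)) *
        ((MvPowerSeries.X (lo c) - MvPowerSeries.X (hi c)) * DD2 g i c)) = NN2 q g i c)

/-- Condition (★3). -/
def Star3 (S : Set K) (n : ℕ)
    (Q : Fin (n - 1) → K → K → MvPowerSeries (Fin 2) K) : Prop :=
  ∀ i : Fin n → K, (∀ k, i k ∈ S) → ∀ c c' : Fin (n - 1), c'.1 = c.1 + 1 →
    permPS (Equiv.swap (lo c) (hi c)) (Qev Q c' (sw c' (sw c i))) =
      permPS (Equiv.swap (lo c') (hi c')) (Qev Q c (sw c (sw c' i)))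

/-- Condition (★4). -/
def Star4 (p : K) (g : PowerSeries K) (S : Set K) (n : ℕ) (Q0 : K → PowerSeries K) : Prop :=
  ∀ i : Fin n → K, (∀ k, i k ∈ S) → ∀ h0 : 0 < n, (i ⟨0, h0⟩)⁻¹ = i ⟨0, h0⟩ →
    emb1 ⟨0, h0⟩ (Q0 (i ⟨0, h0⟩)) =
      MvPowerSeries.C (σ := Fin n) (R := K) (i ⟨0, h0⟩)⁻¹ *
        (MvPowerSeries.C (σ := Fin n) (R := K) p⁻¹ * XbarofI g i h0 -
          MvPowerSeries.C (σ := Fin n) (R := K) p * XofI g i ⟨0, h0⟩)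

/-- The product `{}^{r_0}Q_0(r_0(i)) ⋅ Q_0(i)`. -/
def QQ0 {n : ℕ} (Q0 : K → PowerSeries K) (h0 : 0 < n) (i : Fin n → K) :
    MvPowerSeries (Fin n) K :=
  negFirst h0 (emb1 ⟨0, h0⟩ (Q0 (i ⟨0, h0⟩)⁻¹)) * emb1 ⟨0, h0⟩ (Q0 (i ⟨0, h0⟩))

/-- `(X̄_1(i) - X_1(i))(X_1(i) - X̄_1(i))`. -/
def DD0 (g : PowerSeries K) (h0 : 0 < n) (i : Fin n → K) : MvPowerSeries (Fin n) K :=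
  (XbarofI g i h0 - XofI g i ⟨0, h0⟩) * (XofI g i ⟨0, h0⟩ - XbarofI g i h0)

/-- `(pX̄_1(i) - p⁻¹X_1(i))(pX_1(i) - p⁻¹X̄_1(i))`. -/
def NN0 (p : K) (g : PowerSeries K) (h0 : 0 < n) (i : Fin n → K) :
    MvPowerSeries (Fin n) K :=
  (MvPowerSeries.C (σ := Fin n) (R := K) p * XbarofI g i h0 -
      MvPowerSeries.C (σ := Fin n) (R := K) p⁻¹ * XofI g i ⟨0, h0⟩) *
    (MvPowerSeries.C (σ := Fin n) (R := K) p * XofI g i ⟨0, h0⟩ -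
      MvPowerSeries.C (σ := Fin n) (R := K) p⁻¹ * XbarofI g i h0)

/-- Condition (★5). -/
def Star5 (p : K) (g : PowerSeries K) (S : Set K) (n : ℕ) (Q0 : K → PowerSeries K) : Prop :=
  ∀ i : Fin n → K, (∀ k, i k ∈ S) → ∀ h0 : 0 < n,
    (pnon p (i ⟨0, h0⟩) → QQ0 Q0 h0 i * DD0 g h0 i = NN0 p g h0 i) ∧
    (parr p (i ⟨0, h0⟩) →
      QQ0 Q0 h0 i * (MvPowerSeries.X ⟨0, h0⟩ * DD0 g h0 i) = NN0 p g h0 i) ∧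
    (pbak p (i ⟨0, h0⟩) →
      QQ0 Q0 h0 i * (-MvPowerSeries.X ⟨0, h0⟩ * DD0 g h0 i) = NN0 p g h0 i) ∧
    (pdbl p (i ⟨0, h0⟩) →
      QQ0 Q0 h0 i * (-(MvPowerSeries.X ⟨0, h0⟩ * MvPowerSeries.X ⟨0, h0⟩) * DD0 g h0 i) =
        NN0 p g h0 i)

/-- Condition (★6). -/
def Star6 (S : Set K) (n : ℕ) (Q0 : K → PowerSeries K)
    (Q : Fin (n - 1) → K → K → MvPowerSeries (Fin 2) K) : Prop :=
  ∀ i : Fin n → K, (∀ k, i k ∈ S) → ∀ h2 : 1 < n,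
    (permPS (Equiv.swap ⟨0, Nat.lt_of_succ_lt h2⟩ ⟨1, h2⟩)
        (negFirst (Nat.lt_of_succ_lt h2)
          (permPS (Equiv.swap ⟨0, Nat.lt_of_succ_lt h2⟩ ⟨1, h2⟩)
            (emb1 ⟨0, Nat.lt_of_succ_lt h2⟩ (Q0 (i ⟨0, Nat.lt_of_succ_lt h2⟩))))) =
      emb1 ⟨0, Nat.lt_of_succ_lt h2⟩ (Q0 (i ⟨0, Nat.lt_of_succ_lt h2⟩))) ∧
    (negFirst (Nat.lt_of_succ_lt h2)
        (permPS (Equiv.swap ⟨0, Nat.lt_of_succ_lt h2⟩ ⟨1, h2⟩)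
          (negFirst (Nat.lt_of_succ_lt h2)
            (Qev Q ⟨0, by omega⟩
              (invMove (Nat.lt_of_succ_lt h2)
                (sw ⟨0, by omega⟩ (invMove (Nat.lt_of_succ_lt h2) i)))))) =
      Qev Q ⟨0, by omega⟩ i)

/-! ### Dimension vectors -/

/-- The dimension vector attached to a tuple: `dimvec i s = #{k : i_k ∈ {s, s⁻¹}}`. -/
def dimvec (i : Fin n → K) : K → ℕ := fun s =>
  (Finset.univ.filter fun k => i k = s ∨ i k = s⁻¹).card

end PdAW

end
namespace PdAW

open PowerSeries

section Aux
variable {K : Type} [Field K]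

open PowerSeries

lemma one_sub_X_inv : ((1 - X : K⟦X⟧))⁻¹ = invUnitsSub 1 := by
  rw [PowerSeries.inv_eq_iff_mul_eq_one]
  · have := invUnitsSub_mul_sub (R := K) 1
    simpa using this
  · simp

lemma coeff_fVV (k : ℕ) : coeff (R := K) k (fVV : K⟦X⟧) =
    if k = 0 then 0 else if k = 1 then 2 else 1 := by
  rw [fVV, map_add, one_sub_X_inv]
  rcases k with _ | k
  · simp
  · rcases k with _ | k
    · simp [coeff_succ_X_mul, coeff_invUnitsSub]
      norm_num
    · simp [coeff_succ_X_mul, coeff_invUnitsSub, coeff_X]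

lemma coeff_pow_eq_zero {u : K⟦X⟧} (hu : constantCoeff (R := K) u = 0) {k d : ℕ} (h : d < k) :
    coeff (R := K) d (u ^ k) = 0 := by
  have hX : (X : K⟦X⟧) ^ k ∣ u ^ k := pow_dvd_pow_of_dvd (X_dvd_iff.mpr hu) k
  exact (X_pow_dvd_iff.mp hX) d h

lemma key_comp1 (u : K⟦X⟧) (hu : constantCoeff (R := K) u = 0) :
    (1 - u) * comp1 fVV u = 2 * u - u ^ 2 := by
  have main : comp1 fVV u = 2 * u - u ^ 2 + u * comp1 fVV u := by
    ext d
    set c : ℕ → K := fun k => coeff (R := K) d (u ^ k) with hc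
    set a : ℕ → K := fun k => if k = 0 then 0 else if k = 1 then 2 else 1 with ha
    have hL : coeff (R := K) d (comp1 fVV u) = ∑ k ∈ Finset.range (d + 1), a k * c k := by
      simp only [comp1, coeff_mk]
      exact Finset.sum_congr rfl fun k _ => by rw [coeff_fVV]
    have hmulF : coeff (R := K) d (u * comp1 fVV u) =
        ∑ k ∈ Finset.range (d + 1), a k * c (k + 1) := by
      rw [coeff_mul]
      have step : ∀ p ∈ Finset.HasAntidiagonal.antidiagonal d,
          coeff (R := K) p.1 u * coeff (R := K) p.2 (comp1 fVV u) =
          ∑ k ∈ Finset.range (d + 1), a k * (coeff (R := K) p.1 u * coeff (R := K) p.2 (u ^ k)) := by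
        intro p hp
        have hp2 : p.2 ≤ d := by
          have := Finset.HasAntidiagonal.mem_antidiagonal.mp hp; omega
        have : coeff (R := K) p.2 (comp1 fVV u) =
            ∑ k ∈ Finset.range (d + 1), a k * coeff (R := K) p.2 (u ^ k) := by
          simp only [comp1, coeff_mk]
          rw [Finset.sum_subset (Finset.range_subset_range.mpr (Nat.succ_le_succ hp2))]
          · exact Finset.sum_congr rfl fun k _ => by rw [coeff_fVV]
          · intro k hk hk'
            have : p.2 < k := by simp [Finset.mem_range] at hk hk' ⊢; omega
            rw [coeff_pow_eq_zero hu this, mul_zero]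
        rw [this, Finset.mul_sum]
        exact Finset.sum_congr rfl fun k _ => by ring
      rw [Finset.sum_congr rfl step, Finset.sum_comm]
      refine Finset.sum_congr rfl fun k _ => ?_
      rw [← Finset.mul_sum, ← coeff_mul, ← pow_succ']
    have hpow1 : c 1 = coeff (R := K) d u := by simp [hc]
    have hpow2 : c 2 = coeff (R := K) d (u ^ 2) := rfl
    rw [hL, map_add, map_sub, hmulF]
    -- now pure finite-sum identity
    have split : ∀ k, a k * c k - a k * c (k + 1) =
        ((if k = 0 then 0 else 1) * (c k - c (k + 1))) +
        ((if k = 1 then (c 1 - c 2) else 0)) := by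
      intro k
      rcases k with _ | k
      · simp [ha]
      · rcases k with _ | k
        · simp [ha]; ring
        · simp [ha]
    have goal' : (∑ k ∈ Finset.range (d + 1), a k * c k) -
        (∑ k ∈ Finset.range (d + 1), a k * c (k + 1)) = 2 * c 1 - c 2 := by
      rw [← Finset.sum_sub_distrib]
      rw [Finset.sum_congr rfl fun k _ => split k, Finset.sum_add_distrib]
      have t1 : ∑ k ∈ Finset.range (d + 1),
          ((if k = 0 then (0:K) else 1) * (c k - c (k + 1))) = c 1 - c (d + 1) := by
        have : ∀ k, ((if k = 0 then (0:K) else 1) * (c k - c (k + 1))) =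
            (c k - c (k+1)) - (if k = 0 then (c 0 - c 1) else 0) := by
          intro k; rcases k with _ | k <;> simp
        rw [Finset.sum_congr rfl fun k _ => this k, Finset.sum_sub_distrib,
          Finset.sum_range_sub' c, Finset.sum_ite_eq' (Finset.range (d+1)) 0]
        simp
      have t2 : ∑ k ∈ Finset.range (d + 1),
          (if k = 1 then (c 1 - c 2) else (0:K)) = if d = 0 then 0 else c 1 - c 2 := by
        rw [Finset.sum_ite_eq' (Finset.range (d+1)) 1]
        rcases d with _ | d <;> simp [Finset.mem_range]
      rw [t1, t2]
      have hcd1 : c (d + 1) = 0 := coeff_pow_eq_zero hu (by omega)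
      rcases d with _ | d
      · have h1 : c 1 = 0 := hcd1
        have h2 : c 2 = 0 := coeff_pow_eq_zero hu (by omega)
        simp [h1, h2]
      · simp [hcd1]; ring
    have hc1 : c 1 = coeff (R := K) d u := by simp [hc]
    rw [two_mul, map_add, ← hc1, show coeff (R := K) d (u ^ 2) = c 2 from rfl]
    linear_combination goal'
  calc (1 - u) * comp1 fVV u = comp1 fVV u - u * comp1 fVV u := by ring
  _ = 2 * u - u ^ 2 := by linear_combination main

lemma comp1_rescale (f u : K⟦X⟧) (c : K) : comp1 f (rescale c u) = rescale c (comp1 f u) := by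
  ext d
  simp only [comp1, coeff_mk, coeff_rescale, Finset.mul_sum]
  refine Finset.sum_congr rfl fun k _ => ?_
  rw [← map_pow, coeff_rescale]; ring

end Aux

/-- Lemma 5.5.  If `g` is the compositional inverse of
`f(z) = z + z/(1-z)`, then `1 - g(-z) = (1 - g(z))⁻¹`. -/
theorem statement12 {K : Type} [Field K] (hchar : (2 : K) ≠ 0)
    (g : PowerSeries K) (hg0 : PowerSeries.constantCoeff (R := K) g = 0)
    (hfg : comp1 fVV g = PowerSeries.X) (hgf : comp1 g fVV = PowerSeries.X) :
    1 - PowerSeries.rescale (-1 : K) g = (1 - g)⁻¹ := by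
  set h := rescale (-1 : K) g with hh
  have hch : constantCoeff (R := K) h = 0 := by
    have : coeff (R := K) 0 h = coeff (R := K) 0 g := by rw [hh, coeff_rescale]; simp
    simpa [coeff_zero_eq_constantCoeff_apply, hg0] using this
  have hfh : comp1 fVV h = -X := by
    rw [hh, comp1_rescale, hfg, rescale_neg_one_X]
  have eg : (1 - g) * X = 2 * g - g ^ 2 := by
    have := key_comp1 g hg0; rwa [hfg] at this
  have eh : (1 - h) * (-X) = 2 * h - h ^ 2 := by
    have := key_comp1 h hch; rwa [hfh] at this
  have hgc : constantCoeff (R := K) (1 - g) ≠ 0 := by simp [hg0]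
  have hinv : (1 - g) * (1 - g)⁻¹ = 1 := PowerSeries.mul_inv_cancel _ hgc
  set w : K⟦X⟧ := 1 - (1 - g)⁻¹ with hw
  have hQw : (1 - g) ^ 2 * (w ^ 2 - (2 - X) * w - X) = 0 := by
    rw [hw]
    linear_combination (2 * g + ((1 - g) * (1 - g)⁻¹ - 1) + (2 - X) * (1 - g)) * hinv - eg
  have hdne : (1 - g) ^ 2 ≠ 0 :=
    pow_ne_zero _ (fun h0 => hgc (by rw [h0]; simp))
  have hQw' : w ^ 2 - (2 - X) * w - X = 0 := by
    rcases mul_eq_zero.mp hQw with h1 | h1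
    · exact absurd h1 hdne
    · exact h1
  have hQh : h ^ 2 - (2 - X) * h - X = 0 := by linear_combination eh
  have hfac : (h - w) * (h + w - (2 - X)) = 0 := by linear_combination hQh - hQw'
  have hsum_ne : h + w - (2 - X) ≠ 0 := by
    intro h0
    apply hchar
    have h1 := congrArg (constantCoeff (R := K)) h0
    simp [hch, hw, PowerSeries.constantCoeff_inv, hg0, constantCoeff_X, sub_eq_zero,
      map_ofNat] at h1
    exact h1
  have hhw : h = w := by
    rcases mul_eq_zero.mp hfac with h1 | h1
    · exact sub_eq_zero.mp h1
    · exact absurd h1 hsum_ne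
  rw [hhw, hw]; ring


end PdAW
end

section
/- With ρ : 𝕀_{N,A} → e_α H(A_n)_{λ,m} and σ : Ĥ(A_n) → 𝕀_{N,A} the algebra homomorphisms defined by e(i) ↦ e^H(i), X_j ↦ X_j e_α, Φ_b ↦ Φ^H_b := g_b e_α − Σ_{i∈α, i_b≠i_{b+1}} (q−q^{−1})(1 − X_bX_{b+1}^{−1})^{−1}e^H(i) + Σ_{i∈α, i_b=i_{b+1}} q^{−1}e^H(i), and by X_j ↦ X_j, g_b ↦ Φ_b + Σ_{i∈α, i_b≠i_{b+1}} (q−q^{−1})(1 − X_bX_{b+1}^{−1})^{−1}e(i) − Σ_{i∈α, i_b=i_{b+1}} q^{−1}e(i) respectively, the map σ factors through the canonical surjection Ĥ(A_n) → e_α H(A_n)_{λ,m} (the quotient map Ĥ(A_n) → H(A_n)_{λ,m} followed by multiplication by e_α), and the induced homomorphism e_α H(A_n)_{λ,m} → 𝕀_{N,A} is a two-sided inverse of ρ; in particular ρ is a K-algebra isomorphism. -/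
/-!
Formalization of definitions from:
L. Poulain d'Andecy and R. Walker, "Affine Hecke algebras and generalisations
of quiver Hecke algebras for type B".

Presented algebras are realized as `RingQuot` quotients of free algebras.
-/

open scoped BigOperators Classical

namespace PdAW

section Aux

variable {K : Type} [Field K] {n : ℕ}

/-- Uniqueness of local inverses. -/
theorem locInv_unique {A : Type} [Ring A] {e w Z Z' : A}
    (h1 : Z * e = Z) (h2 : Z * w = e) (h3 : Z' * w = e) (h4 : e * Z' = Z')
    (h5 : Commute Z' w) : Z = Z' := by
  calc Z = Z * e := h1.symm
    _ = Z * (w * Z') := by rw [← h5.eq, h3]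
    _ = e * Z' := by rw [← mul_assoc, h2]
    _ = Z' := h4

/-- A left inverse commuting appropriately. -/
theorem commute_of_inv {A : Type} [Monoid A] {z a b : A}
    (h : Commute z a) (h1 : a * b = 1) (h2 : b * a = 1) : Commute z b := by
  show z * b = b * z
  calc z * b = (b * a) * (z * b) := by rw [h2, one_mul]
    _ = b * ((a * z) * b) := by rw [mul_assoc, ← mul_assoc a z b]
    _ = b * ((z * a) * b) := by rw [← h.eq]
    _ = (b * z) * (a * b) := by rw [mul_assoc z a b, ← mul_assoc b z (a * b)]
    _ = b * z := by rw [h1, mul_one]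

theorem spectral_cross {A : Type} [Ring A] [Algebra K A]
    {Xs : Fin n → A} {T T' : Finset (Fin n → K)} {E E' : (Fin n → K) → A}
    (h : IsSpectralFamily Xs T E) (h' : IsSpectralFamily Xs T' E')
    (i j : Fin n → K) (hij : i ≠ j) : E i * E' j = 0 := by
  by_cases hiT : i ∈ T
  swap
  · rw [h.1 i hiT, zero_mul]
  by_cases hjT : j ∈ T'
  swap
  · rw [h'.1 j hjT, mul_zero]
  obtain ⟨k, hk⟩ := Function.ne_iff.mp hij
  obtain ⟨N1, -, hN1⟩ := h.2.2.2.2.2 i hiT k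
  obtain ⟨N2, -, hN2⟩ := h'.2.2.2.2.2 j hjT k
  set a := Xs k - algebraMap K A (i k) with ha
  set b := Xs k - algebraMap K A (j k) with hb
  set u := E i * E' j with hu
  have hXE : Commute (Xs k) (E i) := h.2.2.2.2.1 i k
  have hbE : Commute b (E i) := (hXE.sub_left (Algebra.commute_algebraMap_left _ _))
  have hab : Commute a b :=
    ((Commute.refl (Xs k)).sub_right (Algebra.commute_algebraMap_right _ _)).sub_left
      ((Algebra.commute_algebraMap_left _ _).sub_right (Algebra.commute_algebraMap_left _ _))
  have hau' : ∀ t, N1 ≤ t → a ^ t * u = 0 := by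
    intro t ht
    obtain ⟨s, rfl⟩ := Nat.exists_eq_add_of_le ht
    rw [add_comm, pow_add, mul_assoc, hu, ← mul_assoc (a ^ N1), hN1, zero_mul, mul_zero]
  have hbu : ∀ t, N2 ≤ t → b ^ t * u = 0 := by
    intro t ht
    obtain ⟨s, rfl⟩ := Nat.exists_eq_add_of_le ht
    rw [add_comm, pow_add, mul_assoc, hu, ← mul_assoc (b ^ N2), (hbE.pow_left N2).eq,
      mul_assoc (E i), hN2, mul_zero, mul_zero]
  have hcast : algebraMap K A (j k - i k) = a + -b := by
    rw [map_sub, ha, hb]; abel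
  have key : algebraMap K A ((j k - i k) ^ (N1 + N2)) * u = 0 := by
    rw [map_pow, hcast, (hab.neg_right).add_pow, Finset.sum_mul]
    apply Finset.sum_eq_zero
    intro x _
    rw [mul_assoc (a ^ x * (-b) ^ (N1 + N2 - x)),
      (Nat.cast_commute ((N1 + N2).choose x) u).eq, ← mul_assoc]
    suffices hz : a ^ x * (-b) ^ (N1 + N2 - x) * u = 0 by rw [hz, zero_mul]
    rcases le_or_gt N1 x with h1 | h1
    · rw [((hab.neg_right).pow_pow x (N1 + N2 - x)).eq, mul_assoc, hau' x h1, mul_zero]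
    · have h2 : N2 ≤ N1 + N2 - x := by omega
      have hz : (-b) ^ (N1 + N2 - x) * u = 0 := by
        rw [neg_pow, mul_assoc, hbu _ h2, mul_zero]
      rw [mul_assoc, hz, mul_zero]
  have hne0 : (j k - i k) ^ (N1 + N2) ≠ 0 := pow_ne_zero _ (sub_ne_zero.mpr (Ne.symm hk))
  have key2 : ((j k - i k) ^ (N1 + N2)) • u = 0 := by rw [Algebra.smul_def]; exact key
  calc u = ((j k - i k) ^ (N1 + N2))⁻¹ • (((j k - i k) ^ (N1 + N2)) • u) :=
        (inv_smul_smul₀ hne0 u).symm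
    _ = 0 := by rw [key2, smul_zero]

/-- Uniqueness of spectral families. -/
theorem spectral_eq {A : Type} [Ring A] [Algebra K A]
    {Xs : Fin n → A} {T T' : Finset (Fin n → K)} {E E' : (Fin n → K) → A}
    (h : IsSpectralFamily Xs T E) (h' : IsSpectralFamily Xs T' E') :
    ∀ i, E i = E' i := by
  intro i
  have hsum1 : E i = ∑ j ∈ T', E i * E' j := by rw [← Finset.mul_sum, h'.2.1, mul_one]
  have hsum2 : E' i = ∑ j ∈ T, E j * E' i := by rw [← Finset.sum_mul, h.2.1, one_mul]
  by_cases hiT' : i ∈ T'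
  · by_cases hiT : i ∈ T
    · have e1 : E i = E i * E' i := hsum1.trans (Finset.sum_eq_single_of_mem i hiT'
        (fun j _ hji => spectral_cross h h' i j (Ne.symm hji)))
      have e2 : E' i = E i * E' i := hsum2.trans (Finset.sum_eq_single_of_mem i hiT
        (fun j _ hji => spectral_cross h h' j i hji))
      exact e1.trans e2.symm
    · have e0 : E i = 0 := h.1 i hiT
      have e2 : E' i = 0 := by
        rw [hsum2]
        apply Finset.sum_eq_zero
        intro j hj
        rcases eq_or_ne j i with rfl | hji
        · rw [e0, zero_mul]
        · exact spectral_cross h h' j i hji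
      rw [e0, e2]
  · have e0 : E' i = 0 := h'.1 i hiT'
    have e1 : E i = 0 := by
      rw [hsum1]
      apply Finset.sum_eq_zero
      intro j hj
      rcases eq_or_ne j i with rfl | hji
      · rw [e0, mul_zero]
      · exact spectral_cross h h' i j (Ne.symm hji)
    rw [e0, e1]

/-- An algebra homomorphism maps `polyProd` to `polyProd`. -/
theorem map_polyProd {A B : Type} [Ring A] [Algebra K A] [Ring B] [Algebra K B]
    (g : A →ₐ[K] B) (x : A) (I : Finset K) (m : K → ℕ) :
    g (polyProd x I m) = polyProd (g x) I m := by
  unfold polyProd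
  exact (Finset.map_noncommProd _ _ _ g).trans (Finset.noncommProd_congr rfl (fun lam _ => by
    rw [map_pow, map_sub, AlgHom.commutes]) _)

end Aux

/-- Lemma 6.4, type A.  With `ρ` and `σ` the homomorphisms of
Lemma 6.3 (characterized by their values on the generators), `σ` factors through the
canonical surjection `Ĥ(A_n) → e_α H(A_n)_{λ,m}` and the induced map is a two-sided
inverse of `ρ`; in particular `ρ` is an isomorphism. -/
theorem statement14 {K : Type} [Field K] (p q : K)
    (hp : p ≠ 0) (hq : q ≠ 0) (hp2 : p ^ 2 ≠ 1) (hq2 : q ^ 2 ≠ 1) (hchar : (2 : K) ≠ 0)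
    {l : ℕ} (lam : Fin l → K) (hlam : ∀ a, lam a ≠ 0)
    (hdisj : ∀ a b : Fin l, a ≠ b → Iset q (lam a) ∩ Iset q (lam b) = ∅)
    (m : K →₀ ℕ) (hm : ∀ x ∈ m.support, x ∈ Sset q lam)
    (n : ℕ) (hn : 0 < n)
    (α : Finset (Fin n → K)) (hαcl : IsAClosed (↑α : Set (Fin n → K)))
    (hαS : ∀ i ∈ α, ∀ k, i k ∈ Sset q lam)
    (T : Finset (Fin n → K)) (E : (Fin n → K) → HeckeAc q n m)
    (hspec : IsSpectralFamily (fun k => RingQuot.mkAlgHom K (HAcRel q n m) (aX k)) T E)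
    (N : ℕ)
    (hN : ∀ i ∈ T, ∀ k : Fin n,
      ((RingQuot.mkAlgHom K (HAcRel q n m) (aX k) -
        algebraMap K (HeckeAc q n m) (i k)) * E i) ^ N = 0)
    (cInv : Fin (n - 1) → {x // x ∈ α} → Corner (HeckeAc q n m) (∑ i ∈ α, E i))
    (hcInv : ∀ b : Fin (n - 1), ∀ i : {x // x ∈ α}, i.1 (lo b) ≠ i.1 (hi b) →
      cInv b i * cornerMk (K := K) (∑ j ∈ α, E j)
          (RingQuot.mkAlgHom K (HAcRel q n m) (1 - aX (lo b) * aXi (hi b))) =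
        cornerMk (K := K) (∑ j ∈ α, E j) (E i.1) ∧
      cInv b i * cornerMk (K := K) (∑ j ∈ α, E j) (E i.1) = cInv b i ∧
      cornerMk (K := K) (∑ j ∈ α, E j) (E i.1) * cInv b i = cInv b i ∧
      ∀ k : Fin n, Commute (cInv b i)
        (cornerMk (K := K) (∑ j ∈ α, E j) (RingQuot.mkAlgHom K (HAcRel q n m) (aX k))))
    (ρ : IA q n α m N →ₐ[K] Corner (HeckeAc q n m) (∑ i ∈ α, E i))
    (hρe : ∀ i : {x // x ∈ α}, ρ (RingQuot.mkAlgHom K (IARel q n α m N) (te i)) =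
      cornerMk (K := K) (∑ j ∈ α, E j) (E i.1))
    (hρX : ∀ k : Fin n, ρ (RingQuot.mkAlgHom K (IARel q n α m N) (tX k)) =
      cornerMk (K := K) (∑ j ∈ α, E j) (RingQuot.mkAlgHom K (HAcRel q n m) (aX k)))
    (hρφ : ∀ b : Fin (n - 1), ρ (RingQuot.mkAlgHom K (IARel q n α m N) (tφ b)) =
      cornerMk (K := K) (∑ j ∈ α, E j) (RingQuot.mkAlgHom K (HAcRel q n m) (ag b)) -
      (∑ i ∈ α.attach, if i.1 (lo b) ≠ i.1 (hi b) then (q - q⁻¹) • cInv b i else 0) +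
      ∑ i ∈ α.attach, if i.1 (lo b) = i.1 (hi b) then
        q⁻¹ • cornerMk (K := K) (∑ j ∈ α, E j) (E i.1) else 0)
    (dInv : Fin (n - 1) → {x // x ∈ α} → IA q n α m N)
    (hdInv : ∀ b : Fin (n - 1), ∀ i : {x // x ∈ α}, i.1 (lo b) ≠ i.1 (hi b) →
      dInv b i * RingQuot.mkAlgHom K (IARel q n α m N) (1 - tX (lo b) * tXi (hi b)) =
        RingQuot.mkAlgHom K (IARel q n α m N) (te i) ∧
      dInv b i * RingQuot.mkAlgHom K (IARel q n α m N) (te i) = dInv b i ∧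
      RingQuot.mkAlgHom K (IARel q n α m N) (te i) * dInv b i = dInv b i ∧
      ∀ k : Fin n, Commute (dInv b i) (RingQuot.mkAlgHom K (IARel q n α m N) (tX k)))
    (σ : HeckeA q n →ₐ[K] IA q n α m N)
    (hσX : ∀ k : Fin n, σ (RingQuot.mkAlgHom K (HARel q n) (aX k)) =
      RingQuot.mkAlgHom K (IARel q n α m N) (tX k))
    (hσg : ∀ b : Fin (n - 1), σ (RingQuot.mkAlgHom K (HARel q n) (ag b)) =
      RingQuot.mkAlgHom K (IARel q n α m N) (tφ b) +
      (∑ i ∈ α.attach, if i.1 (lo b) ≠ i.1 (hi b) then (q - q⁻¹) • dInv b i else 0) -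
      ∑ i ∈ α.attach, if i.1 (lo b) = i.1 (hi b) then
        q⁻¹ • RingQuot.mkAlgHom K (IARel q n α m N) (te i) else 0) :
    ∃ σbar : Corner (HeckeAc q n m) (∑ i ∈ α, E i) →ₐ[K] IA q n α m N,
      (∀ a : FreeAlgebra K (AGen n),
        σbar (cornerMk (K := K) (∑ j ∈ α, E j) (RingQuot.mkAlgHom K (HAcRel q n m) a)) =
          σ (RingQuot.mkAlgHom K (HARel q n) a)) ∧
      (∀ x : IA q n α m N, σbar (ρ x) = x) ∧
      (∀ y : Corner (HeckeAc q n m) (∑ i ∈ α, E i), ρ (σbar y) = y) := by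
  classical
  have hIArel : ∀ {a b : FreeAlgebra K (IAGen K n α)}, IARel q n α m N a b →
      RingQuot.mkAlgHom K (IARel q n α m N) a = RingQuot.mkAlgHom K (IARel q n α m N) b :=
    fun h => RingQuot.mkAlgHom_rel K h
  -- Sum of idempotents is 1 in the intermediary algebra
  have hsumI : ∑ i ∈ α.attach, RingQuot.mkAlgHom K (IARel q n α m N) (te i) = 1 := by
    have := hIArel (IARel.ofX (XARel.esum))
    rw [map_sum, map_one] at this
    exact this
  -- Cyclotomic relation in the intermediary algebra
  have hteCyc : ∀ i : {x // x ∈ α},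
      (RingQuot.mkAlgHom K (IARel q n α m N) (tX ⟨0, hn⟩) -
        algebraMap K (IA q n α m N) (i.1 ⟨0, hn⟩)) ^ (m (i.1 ⟨0, hn⟩)) *
        RingQuot.mkAlgHom K (IARel q n α m N) (te i) = 0 := by
    intro i
    have := hIArel (IARel.ofX (XARel.cyc i hn))
    rw [map_mul, map_pow, map_sub, AlgHom.commutes, map_zero] at this
    exact this
  -- X's commute with the idempotents in the intermediary algebra
  have hXeI : ∀ (k : Fin n) (i : {x // x ∈ α}),
      Commute (RingQuot.mkAlgHom K (IARel q n α m N) (tX k))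
        (RingQuot.mkAlgHom K (IARel q n α m N) (te i)) := by
    intro k i
    have := hIArel (IARel.ofX (XARel.Xe k i))
    rw [map_mul, map_mul] at this
    exact this
  -- X's are invertible in the intermediary algebra
  have hXu : ∀ k : Fin n, RingQuot.mkAlgHom K (IARel q n α m N) (tX k) *
      RingQuot.mkAlgHom K (IARel q n α m N) (tXi k) = 1 := by
    intro k
    have := hIArel (IARel.ofX (XARel.Xunit k))
    rw [map_mul, map_one] at this
    exact this
  have hXu' : ∀ k : Fin n, RingQuot.mkAlgHom K (IARel q n α m N) (tXi k) *
      RingQuot.mkAlgHom K (IARel q n α m N) (tX k) = 1 := by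
    intro k
    have := hIArel (IARel.ofX (XARel.Xunit' k))
    rw [map_mul, map_one] at this
    exact this
  -- The cyclotomic polynomial vanishes in the intermediary algebra
  have hpoly : polyProd (RingQuot.mkAlgHom K (IARel q n α m N) (tX ⟨0, hn⟩)) m.support ⇑m = 0 := by
    calc polyProd (RingQuot.mkAlgHom K (IARel q n α m N) (tX ⟨0, hn⟩)) m.support ⇑m
        = polyProd (RingQuot.mkAlgHom K (IARel q n α m N) (tX ⟨0, hn⟩)) m.support ⇑m *
          ∑ i ∈ α.attach, RingQuot.mkAlgHom K (IARel q n α m N) (te i) := by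
          rw [hsumI, mul_one]
      _ = ∑ i ∈ α.attach, polyProd (RingQuot.mkAlgHom K (IARel q n α m N) (tX ⟨0, hn⟩))
            m.support ⇑m * RingQuot.mkAlgHom K (IARel q n α m N) (te i) := Finset.mul_sum _ _ _
      _ = 0 := by
          apply Finset.sum_eq_zero
          intro i _
          by_cases hm0 : m (i.1 ⟨0, hn⟩) = 0
          · have h0 : RingQuot.mkAlgHom K (IARel q n α m N) (te i) = 0 := by
              have := hteCyc i
              rwa [hm0, pow_zero, one_mul] at this
            rw [h0, mul_zero]
          · have hmem : i.1 ⟨0, hn⟩ ∈ m.support := Finsupp.mem_support_iff.mpr hm0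
            have hsplit : polyProd (RingQuot.mkAlgHom K (IARel q n α m N) (tX ⟨0, hn⟩))
                m.support ⇑m =
                (RingQuot.mkAlgHom K (IARel q n α m N) (tX ⟨0, hn⟩) -
                  algebraMap K (IA q n α m N) (i.1 ⟨0, hn⟩)) ^ (m (i.1 ⟨0, hn⟩)) *
                polyProd (RingQuot.mkAlgHom K (IARel q n α m N) (tX ⟨0, hn⟩))
                  (m.support.erase (i.1 ⟨0, hn⟩)) ⇑m := by
              unfold polyProd
              exact (Finset.noncommProd_congr (Finset.insert_erase hmem).symm
                (fun _ _ => rfl) _).trans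
                (Finset.noncommProd_insert_of_notMem _ _ _ _ (Finset.notMem_erase _ _))
            have hcomm : Commute (RingQuot.mkAlgHom K (IARel q n α m N) (te i))
                (polyProd (RingQuot.mkAlgHom K (IARel q n α m N) (tX ⟨0, hn⟩))
                  (m.support.erase (i.1 ⟨0, hn⟩)) ⇑m) := by
              unfold polyProd
              apply Finset.noncommProd_commute
              intro lam _
              exact (((hXeI ⟨0, hn⟩ i).symm.sub_right
                (Algebra.commute_algebraMap_right _ _)).pow_right _)
            rw [hsplit, mul_assoc, ← hcomm.eq, ← mul_assoc, hteCyc i, zero_mul]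
  -- σ respects the cyclotomic relations
  have hf : ∀ ⦃a b : FreeAlgebra K (AGen n)⦄, HAcRel q n m a b →
      (σ.comp (RingQuot.mkAlgHom K (HARel q n))) a =
        (σ.comp (RingQuot.mkAlgHom K (HARel q n))) b := by
    intro a b hab
    cases hab with
    | ofA h => exact congrArg σ (RingQuot.mkAlgHom_rel K h)
    | cyc h0 =>
      have hm := map_polyProd (σ.comp (RingQuot.mkAlgHom K (HARel q n)))
        (aX (n := n) ⟨0, h0⟩) m.support ⇑m
      rw [hm, map_zero]
      have hax : (σ.comp (RingQuot.mkAlgHom K (HARel q n))) (aX (n := n) ⟨0, h0⟩) =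
          RingQuot.mkAlgHom K (IARel q n α m N) (tX ⟨0, hn⟩) := by
        rw [AlgHom.comp_apply, hσX]
      rw [hax]
      exact hpoly
  obtain ⟨τ, hτ⟩ : ∃ τ : HeckeAc q n m →ₐ[K] IA q n α m N,
      ∀ a, τ (RingQuot.mkAlgHom K (HAcRel q n m) a) = σ (RingQuot.mkAlgHom K (HARel q n) a) :=
    ⟨RingQuot.liftAlgHom K ⟨σ.comp (RingQuot.mkAlgHom K (HARel q n)), hf⟩,
      fun a => RingQuot.liftAlgHom_mkAlgHom_apply _ _ _ _⟩
  -- The idempotent family in the intermediary algebra is spectral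
  have hspecI : IsSpectralFamily (K := K)
      (fun k => RingQuot.mkAlgHom K (IARel q n α m N) (tX k)) α
      (fun i => if h : i ∈ α then RingQuot.mkAlgHom K (IARel q n α m N) (te ⟨i, h⟩) else 0) := by
    refine ⟨fun i hi => dif_neg hi, ?_, ?_, ?_, ?_, ?_⟩
    · dsimp only
      rw [← Finset.sum_attach α]
      calc ∑ i ∈ α.attach, (if h : i.1 ∈ α then
            RingQuot.mkAlgHom K (IARel q n α m N) (te ⟨i.1, h⟩) else 0)
          = ∑ i ∈ α.attach, RingQuot.mkAlgHom K (IARel q n α m N) (te i) :=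
            Finset.sum_congr rfl (fun i _ => by rw [dif_pos i.2])
        _ = 1 := hsumI
    · intro i
      dsimp only
      by_cases h : i ∈ α
      · rw [dif_pos h]
        have := hIArel (IARel.ofX (XARel.eidem ⟨i, h⟩))
        rwa [map_mul] at this
      · rw [dif_neg h, mul_zero]
    · intro i j hij
      dsimp only
      by_cases hi : i ∈ α
      · by_cases hj : j ∈ α
        · rw [dif_pos hi, dif_pos hj]
          have := hIArel (IARel.ofX (XARel.eorth ⟨i, hi⟩ ⟨j, hj⟩
            (fun hcon => hij (congrArg Subtype.val hcon))))
          rwa [map_mul, map_zero] at this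
        · rw [dif_neg hj, mul_zero]
      · rw [dif_neg hi, zero_mul]
    · intro i k
      dsimp only
      by_cases h : i ∈ α
      · rw [dif_pos h]
        exact (hXeI k ⟨i, h⟩).eq
      · rw [dif_neg h, mul_zero, zero_mul]
    · intro i hi k
      dsimp only
      rw [dif_pos hi]
      by_cases hk : (k : ℕ) = 0
      · have hk0 : k = ⟨0, hn⟩ := Fin.ext hk
        refine ⟨m (i ⟨0, hn⟩) + 1, Nat.succ_pos _, ?_⟩
        rw [hk0, pow_succ', mul_assoc, hteCyc ⟨i, hi⟩, mul_zero]
      · refine ⟨N + 1, Nat.succ_pos _, ?_⟩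
        have := hIArel (IARel.ofX (XARel.nil ⟨i, hi⟩ k hk))
        rw [map_mul, map_pow, map_sub, AlgHom.commutes, map_zero] at this
        rw [pow_succ', mul_assoc, this, mul_zero]
  -- The image under τ of the spectral family of the Hecke algebra is spectral
  have hspecF : IsSpectralFamily (K := K)
      (fun k => RingQuot.mkAlgHom K (IARel q n α m N) (tX k)) T (fun j => τ (E j)) := by
    obtain ⟨s1, s2, s3, s4, s5, s6⟩ := hspec
    refine ⟨fun i hi => by dsimp only; rw [s1 i hi, map_zero],
      by dsimp only; rw [← map_sum, s2, map_one],
      fun i => by dsimp only; rw [← map_mul, s3],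
      fun i j hij => by dsimp only; rw [← map_mul, s4 i j hij, map_zero],
      ?_, ?_⟩
    · intro i k
      dsimp only
      have := congrArg τ (s5 i k)
      rw [map_mul, map_mul, hτ, hσX] at this
      exact this
    · intro i hi k
      dsimp only
      obtain ⟨N', hN', hnil⟩ := s6 i hi k
      refine ⟨N', hN', ?_⟩
      have := congrArg τ hnil
      rw [map_mul, map_pow, map_sub, hτ, hσX, AlgHom.commutes, map_zero] at this
      exact this
  have hEq : ∀ i : {x // x ∈ α}, τ (E i.1) = RingQuot.mkAlgHom K (IARel q n α m N) (te i) := by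
    intro i
    have := spectral_eq hspecI hspecF i.1
    rw [dif_pos i.2] at this
    exact this.symm
  have hτeα : τ (∑ i ∈ α, E i) = 1 := by
    rw [map_sum]
    calc ∑ i ∈ α, τ (E i) = ∑ i ∈ α.attach, τ (E i.1) :=
        (Finset.sum_attach α fun i => τ (E i)).symm
      _ = ∑ i ∈ α.attach, RingQuot.mkAlgHom K (IARel q n α m N) (te i) :=
        Finset.sum_congr rfl (fun i _ => hEq i)
      _ = 1 := hsumI
  obtain ⟨σbar, hσbar⟩ : ∃ σbar : Corner (HeckeAc q n m) (∑ i ∈ α, E i) →ₐ[K] IA q n α m N,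
      ∀ x, σbar (cornerMk (K := K) (∑ j ∈ α, E j) x) = τ x := by
    refine ⟨RingQuot.liftAlgHom K ⟨τ, ?_⟩, fun x => RingQuot.liftAlgHom_mkAlgHom_apply _ _ _ _⟩
    rintro x y ⟨rfl, rfl⟩
    rw [hτeα, map_one]
  have prop1 : ∀ a : FreeAlgebra K (AGen n),
      σbar (cornerMk (K := K) (∑ j ∈ α, E j) (RingQuot.mkAlgHom K (HAcRel q n m) a)) =
        σ (RingQuot.mkAlgHom K (HARel q n) a) := fun a => by rw [hσbar, hτ]
  -- corner images of the X's are invertible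
  have hcXu : ∀ k : Fin n, cornerMk (K := K) (∑ j ∈ α, E j)
      (RingQuot.mkAlgHom K (HAcRel q n m) (aX k)) *
      cornerMk (K := K) (∑ j ∈ α, E j) (RingQuot.mkAlgHom K (HAcRel q n m) (aXi k)) = 1 := by
    intro k
    have := congrArg (cornerMk (K := K) (∑ j ∈ α, E j))
      (RingQuot.mkAlgHom_rel K (HAcRel.ofA (HARel.Xunit k)))
    simpa only [map_mul, map_one] using this
  have hcXu' : ∀ k : Fin n, cornerMk (K := K) (∑ j ∈ α, E j)
      (RingQuot.mkAlgHom K (HAcRel q n m) (aXi k)) *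
      cornerMk (K := K) (∑ j ∈ α, E j) (RingQuot.mkAlgHom K (HAcRel q n m) (aX k)) = 1 := by
    intro k
    have := congrArg (cornerMk (K := K) (∑ j ∈ α, E j))
      (RingQuot.mkAlgHom_rel K (HAcRel.ofA (HARel.Xunit' k)))
    simpa only [map_mul, map_one] using this
  have hρXi : ∀ k : Fin n, ρ (RingQuot.mkAlgHom K (IARel q n α m N) (tXi k)) =
      cornerMk (K := K) (∑ j ∈ α, E j) (RingQuot.mkAlgHom K (HAcRel q n m) (aXi k)) := by
    intro k
    have h1 : ρ (RingQuot.mkAlgHom K (IARel q n α m N) (tX k)) *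
        ρ (RingQuot.mkAlgHom K (IARel q n α m N) (tXi k)) = 1 := by
      have := congrArg ρ (hIArel (IARel.ofX (XARel.Xunit k)))
      simpa only [map_mul, map_one] using this
    refine (left_inv_eq_right_inv (hcXu' k) ?_).symm
    rw [← hρX k]
    exact h1
  have hσXi : ∀ k : Fin n, σ (RingQuot.mkAlgHom K (HARel q n) (aXi k)) =
      RingQuot.mkAlgHom K (IARel q n α m N) (tXi k) := by
    intro k
    have h1 : σ (RingQuot.mkAlgHom K (HARel q n) (aX k)) *
        σ (RingQuot.mkAlgHom K (HARel q n) (aXi k)) = 1 := by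
      have := congrArg σ (RingQuot.mkAlgHom_rel K (HARel.Xunit k))
      simpa only [map_mul, map_one] using this
    refine (left_inv_eq_right_inv (hXu' k) ?_).symm
    rw [← hσX k]
    exact h1
  -- ρ maps the local inverses to the local inverses
  have hρd : ∀ (b : Fin (n - 1)) (i : {x // x ∈ α}), i.1 (lo b) ≠ i.1 (hi b) →
      ρ (dInv b i) = cInv b i := by
    intro b i hne
    obtain ⟨d1, d2, d3, d4⟩ := hdInv b i hne
    obtain ⟨c1, c2, c3, c4⟩ := hcInv b i hne
    have hw : ρ (RingQuot.mkAlgHom K (IARel q n α m N) (1 - tX (lo b) * tXi (hi b))) =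
        cornerMk (K := K) (∑ j ∈ α, E j)
          (RingQuot.mkAlgHom K (HAcRel q n m) (1 - aX (lo b) * aXi (hi b))) := by
      simp only [map_sub, map_one, map_mul, hρX, hρXi]
    apply locInv_unique (e := cornerMk (K := K) (∑ j ∈ α, E j) (E i.1))
        (w := cornerMk (K := K) (∑ j ∈ α, E j)
          (RingQuot.mkAlgHom K (HAcRel q n m) (1 - aX (lo b) * aXi (hi b))))
    · have := congrArg ρ d2
      rwa [map_mul, hρe] at this
    · have := congrArg ρ d1
      rwa [map_mul, hw, hρe] at this
    · exact c1
    · exact c3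
    · have hxi : Commute (cInv b i) (cornerMk (K := K) (∑ j ∈ α, E j)
          (RingQuot.mkAlgHom K (HAcRel q n m) (aXi (hi b)))) :=
        commute_of_inv (c4 (hi b)) (hcXu (hi b)) (hcXu' (hi b))
      have hco : Commute (cInv b i)
          (1 - cornerMk (K := K) (∑ j ∈ α, E j)
            (RingQuot.mkAlgHom K (HAcRel q n m) (aX (lo b))) *
            cornerMk (K := K) (∑ j ∈ α, E j)
              (RingQuot.mkAlgHom K (HAcRel q n m) (aXi (hi b)))) :=
        (Commute.one_right _).sub_right ((c4 (lo b)).mul_right hxi)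
      have hrw : cornerMk (K := K) (∑ j ∈ α, E j)
          (RingQuot.mkAlgHom K (HAcRel q n m) (1 - aX (lo b) * aXi (hi b))) =
          1 - cornerMk (K := K) (∑ j ∈ α, E j)
            (RingQuot.mkAlgHom K (HAcRel q n m) (aX (lo b))) *
            cornerMk (K := K) (∑ j ∈ α, E j)
              (RingQuot.mkAlgHom K (HAcRel q n m) (aXi (hi b))) := by
        simp only [map_sub, map_one, map_mul]
      rw [hrw]
      exact hco
  -- σbar maps the local inverses to the local inverses
  have hbd : ∀ (b : Fin (n - 1)) (i : {x // x ∈ α}), i.1 (lo b) ≠ i.1 (hi b) →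
      σbar (cInv b i) = dInv b i := by
    intro b i hne
    obtain ⟨d1, d2, d3, d4⟩ := hdInv b i hne
    obtain ⟨c1, c2, c3, c4⟩ := hcInv b i hne
    have hbe : σbar (cornerMk (K := K) (∑ j ∈ α, E j) (E i.1)) =
        RingQuot.mkAlgHom K (IARel q n α m N) (te i) := by
      rw [hσbar, hEq]
    have hww : σbar (cornerMk (K := K) (∑ j ∈ α, E j)
        (RingQuot.mkAlgHom K (HAcRel q n m) (1 - aX (lo b) * aXi (hi b)))) =
        RingQuot.mkAlgHom K (IARel q n α m N) (1 - tX (lo b) * tXi (hi b)) := by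
      rw [prop1]
      simp only [map_sub, map_one, map_mul, hσX, hσXi]
    apply locInv_unique (e := RingQuot.mkAlgHom K (IARel q n α m N) (te i))
        (w := RingQuot.mkAlgHom K (IARel q n α m N) (1 - tX (lo b) * tXi (hi b)))
    · have := congrArg σbar c2
      rwa [map_mul, hbe] at this
    · have := congrArg σbar c1
      rwa [map_mul, hww, hbe] at this
    · exact d1
    · exact d3
    · have hxi : Commute (dInv b i) (RingQuot.mkAlgHom K (IARel q n α m N) (tXi (hi b))) :=
        commute_of_inv (d4 (hi b)) (hXu (hi b)) (hXu' (hi b))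
      have hco : Commute (dInv b i)
          (1 - RingQuot.mkAlgHom K (IARel q n α m N) (tX (lo b)) *
            RingQuot.mkAlgHom K (IARel q n α m N) (tXi (hi b))) :=
        (Commute.one_right _).sub_right ((d4 (lo b)).mul_right hxi)
      have hrw : RingQuot.mkAlgHom K (IARel q n α m N) (1 - tX (lo b) * tXi (hi b)) =
          1 - RingQuot.mkAlgHom K (IARel q n α m N) (tX (lo b)) *
            RingQuot.mkAlgHom K (IARel q n α m N) (tXi (hi b)) := by
        simp only [map_sub, map_one, map_mul]
      rw [hrw]
      exact hco
  have hL : σbar.comp ρ = AlgHom.id K (IA q n α m N) := by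
    apply RingQuot.ringQuot_ext'
    apply FreeAlgebra.hom_ext
    funext g
    simp only [Function.comp_apply, AlgHom.coe_comp, AlgHom.id_apply]
    cases g with
    | e i =>
      show σbar (ρ (RingQuot.mkAlgHom K (IARel q n α m N) (te i))) =
        RingQuot.mkAlgHom K (IARel q n α m N) (te i)
      rw [hρe i, hσbar, hEq i]
    | X k =>
      show σbar (ρ (RingQuot.mkAlgHom K (IARel q n α m N) (tX k))) =
        RingQuot.mkAlgHom K (IARel q n α m N) (tX k)
      rw [hρX k, hσbar, hτ, hσX]
    | Xinv k =>
      show σbar (ρ (RingQuot.mkAlgHom K (IARel q n α m N) (tXi k))) =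
        RingQuot.mkAlgHom K (IARel q n α m N) (tXi k)
      rw [hρXi k, hσbar, hτ, hσXi]
    | phi b =>
      show σbar (ρ (RingQuot.mkAlgHom K (IARel q n α m N) (tφ b))) =
        RingQuot.mkAlgHom K (IARel q n α m N) (tφ b)
      rw [hρφ b]
      rw [map_add, map_sub, map_sum, map_sum]
      rw [hσbar, hτ, hσg b]
      have s1 : ∑ i ∈ α.attach, σbar (if i.1 (lo b) ≠ i.1 (hi b) then
            (q - q⁻¹) • cInv b i else 0)
          = ∑ i ∈ α.attach, (if i.1 (lo b) ≠ i.1 (hi b) then (q - q⁻¹) • dInv b i else 0) := by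
        refine Finset.sum_congr rfl (fun i _ => ?_)
        by_cases hne : i.1 (lo b) ≠ i.1 (hi b)
        · rw [if_pos hne, if_pos hne, map_smul, hbd b i hne]
        · rw [if_neg hne, if_neg hne, map_zero]
      have s2 : ∑ i ∈ α.attach, σbar (if i.1 (lo b) = i.1 (hi b) then
            q⁻¹ • cornerMk (K := K) (∑ j ∈ α, E j) (E i.1) else 0)
          = ∑ i ∈ α.attach, (if i.1 (lo b) = i.1 (hi b) then
            q⁻¹ • RingQuot.mkAlgHom K (IARel q n α m N) (te i) else 0) := by
        refine Finset.sum_congr rfl (fun i _ => ?_)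
        by_cases heq : i.1 (lo b) = i.1 (hi b)
        · rw [if_pos heq, if_pos heq, map_smul, hσbar, hEq i]
        · rw [if_neg heq, if_neg heq, map_zero]
      rw [s1, s2]
      abel
  have hR : ρ.comp σbar = AlgHom.id K (Corner (HeckeAc q n m) (∑ i ∈ α, E i)) := by
    apply RingQuot.ringQuot_ext'
    apply RingQuot.ringQuot_ext'
    apply FreeAlgebra.hom_ext
    funext g
    simp only [Function.comp_apply, AlgHom.coe_comp, AlgHom.id_apply]
    cases g with
    | g b =>
      show ρ (σbar (cornerMk (K := K) (∑ j ∈ α, E j)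
          (RingQuot.mkAlgHom K (HAcRel q n m) (ag b)))) =
        cornerMk (K := K) (∑ j ∈ α, E j) (RingQuot.mkAlgHom K (HAcRel q n m) (ag b))
      rw [hσbar, hτ, hσg b]
      rw [map_sub, map_add, map_sum, map_sum]
      rw [hρφ b]
      have s1 : ∑ i ∈ α.attach, ρ (if i.1 (lo b) ≠ i.1 (hi b) then
            (q - q⁻¹) • dInv b i else 0)
          = ∑ i ∈ α.attach, (if i.1 (lo b) ≠ i.1 (hi b) then (q - q⁻¹) • cInv b i else 0) := by
        refine Finset.sum_congr rfl (fun i _ => ?_)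
        by_cases hne : i.1 (lo b) ≠ i.1 (hi b)
        · rw [if_pos hne, if_pos hne, map_smul, hρd b i hne]
        · rw [if_neg hne, if_neg hne, map_zero]
      have s2 : ∑ i ∈ α.attach, ρ (if i.1 (lo b) = i.1 (hi b) then
            q⁻¹ • RingQuot.mkAlgHom K (IARel q n α m N) (te i) else 0)
          = ∑ i ∈ α.attach, (if i.1 (lo b) = i.1 (hi b) then
            q⁻¹ • cornerMk (K := K) (∑ j ∈ α, E j) (E i.1) else 0) := by
        refine Finset.sum_congr rfl (fun i _ => ?_)
        by_cases heq : i.1 (lo b) = i.1 (hi b)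
        · rw [if_pos heq, if_pos heq, map_smul, hρe i]
        · rw [if_neg heq, if_neg heq, map_zero]
      rw [s1, s2]
      abel
    | X k =>
      show ρ (σbar (cornerMk (K := K) (∑ j ∈ α, E j)
          (RingQuot.mkAlgHom K (HAcRel q n m) (aX k)))) =
        cornerMk (K := K) (∑ j ∈ α, E j) (RingQuot.mkAlgHom K (HAcRel q n m) (aX k))
      rw [hσbar, hτ, hσX, hρX]
    | Xinv k =>
      show ρ (σbar (cornerMk (K := K) (∑ j ∈ α, E j)
          (RingQuot.mkAlgHom K (HAcRel q n m) (aXi k)))) =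
        cornerMk (K := K) (∑ j ∈ α, E j) (RingQuot.mkAlgHom K (HAcRel q n m) (aXi k))
      rw [hσbar, hτ, hσXi, hρXi]
  refine ⟨σbar, prop1, fun x => ?_, fun y => ?_⟩
  · have := DFunLike.congr_fun hL x
    simpa using this
  · have := DFunLike.congr_fun hR y
    simpa using this

end PdAW
end
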